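/- arXiv:1604.08070 — 7 statements merged into one kernel-verified Lean document; each statement's English description precedes it below -/
import Mathlib

section
/- Existence of an optimal randomized test for the static problem: under the standing assumptions, there exists φ̃ ∈ R₀ minimizing φ ↦ ρ((φ−1)H) over R₀, and the minimal value ρ((φ̃−1)H) is finite. -/
set_option maxHeartbeats 2000000
open MeasureTheory Set Filter

/-- The set `R₀` of randomized tests `φ : Ω → [0,1]` satisfying the capital
constraint `sup_{P* ∈ P_σ} E^{P*}[φH] ≤ V₀`. -/
def R0 {Ω ι : Type*} [MeasurableSpace Ω] (P : Measure Ω)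
    (H : Ω → ℝ) (Z : ι → Ω → ℝ) (V₀ : ℝ) : Set (Ω → ℝ) :=
  {φ | Measurable φ ∧ (∀ ω, φ ω ∈ Set.Icc (0 : ℝ) 1) ∧
    ∀ i, ∫ ω, φ ω * H ω * Z i ω ∂P ≤ V₀}

/-- Existence of an optimal randomized test for the static problem
`min_{φ ∈ R₀} ρ((φ-1)H)`: under the standing assumptions (ρ a lower
semicontinuous convex risk measure, finite at some `(φ₀-1)H` with `φ₀ ∈ R₀`),
a minimizer `φ̃ ∈ R₀` exists and the minimal value is finite. -/
theorem exists_optimal_randomized_test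
    {Ω : Type*} [MeasurableSpace Ω] (P : Measure Ω) [IsProbabilityMeasure P]
    {ι : Type*} [Nonempty ι]
    (H : Ω → ℝ) (hHmeas : Measurable H) (hHint : Integrable H P)
    (hHpos : ∀ ω, 0 ≤ H ω)
    (Z : ι → Ω → ℝ) (hZmeas : ∀ i, Measurable (Z i)) (hZpos : ∀ i ω, 0 ≤ Z i ω)
    (hZprob : ∀ i, ∫ ω, Z i ω ∂P = 1)
    (hHZ : ∀ i, Integrable (fun ω => H ω * Z i ω) P)
    (hU₀ : BddAbove (Set.range fun i => ∫ ω, H ω * Z i ω ∂P))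
    (V₀ : ℝ) (hV₀ : 0 < V₀)
    (ρ : (Ω → ℝ) → EReal)
    (hρ0 : ρ 0 = 0)
    (hmono : ∀ X Y : Ω → ℝ, (∀ ω, X ω ≤ Y ω) → ρ Y ≤ ρ X)
    (htrans : ∀ (X : Ω → ℝ) (c : ℝ), ρ (fun ω => X ω + c) = ρ X - (c : EReal))
    (hconv : ∀ (X Y : Ω → ℝ) (t : ℝ), t ∈ Set.Icc (0 : ℝ) 1 →
      ρ (fun ω => t * X ω + (1 - t) * Y ω)
        ≤ (t : EReal) * ρ X + ((1 - t : ℝ) : EReal) * ρ Y)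
    (hlsc : ∀ (f : ℕ → Ω → ℝ) (g : Ω → ℝ), (∀ n, Integrable (f n) P) →
      Integrable g P →
      Tendsto (fun n => ∫ ω, |f n ω - g ω| ∂P) atTop (nhds 0) →
      ρ g ≤ liminf (fun n => ρ (f n)) atTop)
    (φ₀ : Ω → ℝ) (hφ₀ : φ₀ ∈ R0 P H Z V₀)
    (hfin : ρ (fun ω => (φ₀ ω - 1) * H ω) ≠ ⊤) :
    ∃ φt ∈ R0 P H Z V₀,
      (∀ φ ∈ R0 P H Z V₀,
        ρ (fun ω => (φt ω - 1) * H ω) ≤ ρ (fun ω => (φ ω - 1) * H ω)) ∧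
      ρ (fun ω => (φt ω - 1) * H ω) ≠ ⊤ ∧
      ρ (fun ω => (φt ω - 1) * H ω) ≠ ⊥ := by
  classical
  set r : (Ω → ℝ) → EReal := fun φ => ρ (fun ω => (φ ω - 1) * H ω) with hr
  -- nonnegativity of r on [0,1]-valued tests
  have hrnn : ∀ φ : Ω → ℝ, (∀ ω, φ ω ∈ Set.Icc (0:ℝ) 1) → (0:EReal) ≤ r φ := by
    intro φ h01
    have h := hmono (fun ω => (φ ω - 1) * H ω) 0 (fun ω => by
      have h1 := (h01 ω).2; have h2 := hHpos ω
      have : (φ ω - 1) * H ω ≤ 0 := mul_nonpos_of_nonpos_of_nonneg (by linarith) h2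
      simpa using this)
    rw [hρ0] at h; exact h
  -- integrability lemmas
  have hint1 : ∀ (w : Ω → ℝ), Measurable w → (∀ ω, w ω ∈ Set.Icc (0:ℝ) 1) →
      ∀ i, Integrable (fun ω => w ω * H ω * Z i ω) P := by
    intro w hw h01 i
    refine (hHZ i).mono' (((hw.mul hHmeas).mul (hZmeas i)).aestronglyMeasurable)
      (ae_of_all _ fun ω => ?_)
    have h0 := (h01 ω).1; have h1 := (h01 ω).2
    have hH := hHpos ω; have hZ := hZpos i ω
    rw [Real.norm_eq_abs, abs_mul, abs_mul, abs_of_nonneg h0, abs_of_nonneg hH,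
      abs_of_nonneg hZ]
    have e1 : w ω * H ω ≤ 1 * H ω := mul_le_mul_of_nonneg_right h1 hH
    have e2 : w ω * H ω * Z i ω ≤ 1 * H ω * Z i ω := mul_le_mul_of_nonneg_right e1 hZ
    linarith
  have hint2 : ∀ (w : Ω → ℝ), Measurable w → (∀ ω, w ω ∈ Set.Icc (0:ℝ) 1) →
      Integrable (fun ω => (w ω - 1) * H ω) P := by
    intro w hw h01
    refine hHint.mono' (((hw.sub measurable_const).mul hHmeas).aestronglyMeasurable)
      (ae_of_all _ fun ω => ?_)
    have h0 := (h01 ω).1; have h1 := (h01 ω).2; have hH := hHpos ω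
    have habs : |w ω - 1| ≤ 1 := abs_le.mpr ⟨by linarith, by linarith⟩
    rw [Real.norm_eq_abs, abs_mul, abs_of_nonneg hH]
    nlinarith [abs_nonneg (w ω - 1)]
  -- the infimum
  set S : Set EReal := r '' (R0 P H Z V₀) with hS
  have hφ₀S : r φ₀ ∈ S := ⟨φ₀, hφ₀, rfl⟩
  set m₀ : EReal := sInf S with hm₀
  have hm₀le : m₀ ≤ r φ₀ := sInf_le hφ₀S
  have hm₀top : m₀ ≠ ⊤ := by
    intro h; rw [h] at hm₀le; exact hfin (top_le_iff.mp hm₀le)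
  have hm₀0 : (0:EReal) ≤ m₀ := le_sInf (by rintro x ⟨φ, hφR, rfl⟩; exact hrnn φ hφR.2.1)
  have hm₀bot : m₀ ≠ ⊥ := by
    intro h; rw [h, le_bot_iff] at hm₀0; exact (by simp : (0:EReal) ≠ ⊥) hm₀0
  set m : ℝ := m₀.toReal with hmdef
  have hmeq : (m : EReal) = m₀ := EReal.coe_toReal hm₀top hm₀bot
  -- minimizing sequence
  have hseq : ∀ n : ℕ, ∃ φ, φ ∈ R0 P H Z V₀ ∧ r φ ≤ ((m + 1/(n+1) : ℝ) : EReal) := by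
    intro n
    have hlt : m₀ < ((m + 1/(n+1) : ℝ) : EReal) := by
      rw [← hmeq]
      refine EReal.coe_lt_coe_iff.mpr ?_
      have hpos : (0:ℝ) < 1/(n+1) := by positivity
      linarith
    obtain ⟨x, ⟨φ, hφR, rfl⟩, hx⟩ := sInf_lt_iff.mp hlt
    exact ⟨φ, hφR, hx.le⟩
  choose φs hφs hφsle using hseq
  -- L² machinery
  haveI : Fact ((1:ENNReal) ≤ 2) := ⟨one_le_two⟩
  have hmem2 : ∀ (w : Ω → ℝ), Measurable w → (∀ ω, w ω ∈ Set.Icc (0:ℝ) 1) → MemLp w 2 P := by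
    intro w hw h01
    exact MemLp.of_bound hw.aestronglyMeasurable 1 (ae_of_all _ fun ω => by
      have := h01 ω
      rw [Real.norm_eq_abs, abs_le]
      exact ⟨by linarith [this.1], this.2⟩)
  set F : ℕ → Lp ℝ 2 P := fun n => (hmem2 (φs n) (hφs n).1 (hφs n).2.1).toLp (φs n) with hF
  have hFnorm : ∀ n, ‖F n‖ ≤ 1 := by
    intro n
    rw [hF, Lp.norm_toLp]
    have h := eLpNorm_le_of_ae_bound (μ := P) (p := 2) (f := φs n) (C := 1)
      (ae_of_all _ fun ω => by
        have := (hφs n).2.1 ω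
        rw [Real.norm_eq_abs, abs_le]
        exact ⟨by linarith [this.1], this.2⟩)
    rw [measure_univ, ENNReal.one_rpow, ENNReal.ofReal_one, one_mul] at h
    exact ENNReal.toReal_le_of_le_ofReal one_pos.le (by simpa using h)
  have hFcoe : ∀ n, (F n : Ω → ℝ) =ᵐ[P] φs n := fun n => MemLp.coeFn_toLp _
  set D : ℕ → Set (Lp ℝ 2 P) := fun n => closure (convexHull ℝ (F '' Set.Ici n)) with hD
  have hDconv : ∀ n, Convex ℝ (D n) := fun n => (convex_convexHull ℝ _).closure
  have hDclosed : ∀ n, IsClosed (D n) := fun n => isClosed_closure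
  have hDne : ∀ n, (F n) ∈ D n :=
    fun n => subset_closure (subset_convexHull ℝ _ ⟨n, le_refl n, rfl⟩)
  have hDmono : ∀ {a b : ℕ}, a ≤ b → D b ⊆ D a := fun hab =>
    closure_mono (convexHull_mono (Set.image_mono (Set.Ici_subset_Ici.mpr hab)))
  have hDnorm : ∀ n, ∀ g ∈ D n, ‖g‖ ≤ 1 := by
    intro n g hg
    have hsub : D n ⊆ Metric.closedBall 0 1 := by
      refine closure_minimal (convexHull_min ?_ (convex_closedBall 0 1)) Metric.isClosed_closedBall
      rintro x ⟨k, hk, rfl⟩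
      simpa [Metric.mem_closedBall, dist_zero_right] using hFnorm k
    simpa [Metric.mem_closedBall, dist_zero_right] using hsub hg
  -- minimal norm elements
  have hmin : ∀ n : ℕ, ∃ v ∈ D n, ‖(0:Lp ℝ 2 P) - v‖ = ⨅ w : D n, ‖(0:Lp ℝ 2 P) - (w:Lp ℝ 2 P)‖ :=
    fun n => exists_norm_eq_iInf_of_complete_convex ⟨F n, hDne n⟩
      (hDclosed n).isComplete (hDconv n) 0
  choose v hvD hvnorm using hmin
  set c : ℕ → ℝ := fun n => ⨅ w : D n, ‖(0:Lp ℝ 2 P) - (w:Lp ℝ 2 P)‖ with hc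
  have hvnorm' : ∀ n, ‖v n‖ = c n := by
    intro n
    have := hvnorm n; rwa [zero_sub, norm_neg] at this
  have hcle : ∀ n, ∀ g ∈ D n, c n ≤ ‖g‖ := by
    intro n g hg
    have hb : BddBelow (Set.range fun w : D n => ‖(0:Lp ℝ 2 P) - (w:Lp ℝ 2 P)‖) := by
      refine ⟨0, ?_⟩; rintro x ⟨w, rfl⟩; exact norm_nonneg _
    have := ciInf_le hb (⟨g, hg⟩ : D n)
    rwa [zero_sub, norm_neg] at this
  have hcmono : Monotone c := by
    intro a b hab
    haveI : Nonempty (D b) := ⟨⟨F b, hDne b⟩⟩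
    refine le_ciInf fun w => ?_
    have := hcle a (w : Lp ℝ 2 P) (hDmono hab w.2)
    rw [zero_sub, norm_neg]
    exact this
  have hcbdd : ∀ n, c n ≤ 1 := fun n => (hvnorm' n) ▸ hDnorm n (v n) (hvD n)
  have hc0 : ∀ n, 0 ≤ c n := fun n => (hvnorm' n) ▸ norm_nonneg (v n)
  set cl : ℝ := ⨆ n, c n with hcl
  have hcbdd' : BddAbove (Set.range c) := ⟨1, by rintro x ⟨n, rfl⟩; exact hcbdd n⟩
  have hctend : Tendsto c atTop (nhds cl) := tendsto_atTop_ciSup hcmono hcbdd'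
  have hccl : ∀ n, c n ≤ cl := fun n => le_ciSup hcbdd' n
  -- Cauchy estimate
  have hkey : ∀ N n, N ≤ n → ‖v n - v N‖ * ‖v n - v N‖ ≤ 2*(cl*cl - c N * c N) := by
    intro N n hNn
    have hvn : v n ∈ D N := hDmono hNn (hvD n)
    have hvN : v N ∈ D N := hvD N
    have hmid : (2⁻¹ : ℝ) • (v n + v N) ∈ D N := by
      have h := (hDconv N) hvn hvN (by norm_num : (0:ℝ) ≤ 2⁻¹) (by norm_num : (0:ℝ) ≤ 2⁻¹)
        (by norm_num)
      rw [smul_add]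
      exact h
    have h1 : c N ≤ ‖(2⁻¹:ℝ) • (v n + v N)‖ := hcle N _ hmid
    have h2 : ‖(2⁻¹:ℝ) • (v n + v N)‖ = 2⁻¹ * ‖v n + v N‖ := by
      rw [norm_smul, Real.norm_eq_abs, abs_of_nonneg (by norm_num : (0:ℝ) ≤ 2⁻¹)]
    have h3 : 2 * c N ≤ ‖v n + v N‖ := by rw [h2] at h1; linarith
    have hpar := parallelogram_law_with_norm ℝ (v n) (v N)
    have hn1 : ‖v n‖ = c n := hvnorm' n
    have hn2 : ‖v N‖ = c N := hvnorm' N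
    nlinarith [hccl n, hccl N, hc0 n, hc0 N, norm_nonneg (v n + v N), hcmono hNn]
  have hcauchy : CauchySeq v := by
    rw [Metric.cauchySeq_iff']
    intro ε hε
    have h2 : Tendsto (fun n => 2*(cl*cl - c n * c n)) atTop (nhds 0) := by
      have hmul := hctend.mul hctend
      have h0 : Tendsto (fun n => cl*cl - c n * c n) atTop (nhds (cl*cl - cl*cl)) :=
        tendsto_const_nhds.sub hmul
      have := h0.const_mul 2
      simpa using this
    have hev : ∀ᶠ n in atTop, 2*(cl*cl - c n * c n) < ε*ε :=
      h2.eventually (gt_mem_nhds (by positivity : (0:ℝ) < ε*ε))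
    obtain ⟨N, hN⟩ := eventually_atTop.mp hev
    refine ⟨N, fun n hn => ?_⟩
    rw [dist_eq_norm]
    have hk := hkey N n hn
    have hN' := hN N (le_refl N)
    nlinarith [norm_nonneg (v n - v N)]
  obtain ⟨vl, hvl⟩ := cauchySeq_tendsto_of_complete hcauchy
  have hvlD : ∀ n, vl ∈ D n := fun n =>
    (hDclosed n).mem_of_tendsto hvl (eventually_atTop.mpr ⟨n, fun m hm => hDmono hm (hvD m)⟩)
  -- approximating convex combinations
  have hu : ∀ n : ℕ, ∃ u ∈ convexHull ℝ (F '' Set.Ici n), dist vl u < 1/(n+1) :=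
    fun n => Metric.mem_closure_iff.mp (hvlD n) _ (by positivity)
  choose u huhull hud using hu
  have hutend : Tendsto u atTop (nhds vl) := by
    rw [tendsto_iff_dist_tendsto_zero]
    refine squeeze_zero (fun n => dist_nonneg) (fun n => ?_) tendsto_one_div_add_atTop_nhds_zero_nat
    rw [dist_comm]
    exact (hud n).le
  -- transfer of properties through the convex hull
  set B : ℕ → ℝ := fun n => m + 1/(n+1) with hB
  set Sp : ℕ → Set (Lp ℝ 2 P) := fun n => {g | ∃ w : Ω → ℝ, Measurable w ∧
      (∀ ω, w ω ∈ Set.Icc (0:ℝ) 1) ∧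
      (∀ i, ∫ ω, w ω * H ω * Z i ω ∂P ≤ V₀) ∧ r w ≤ ((B n : ℝ) : EReal) ∧
      (g : Ω → ℝ) =ᵐ[P] w} with hSp
  have hBm : ∀ n, m ≤ B n := fun n => by
    rw [hB]; have : (0:ℝ) < 1/(n+1) := by positivity
    simp only []; linarith
  have hhull : ∀ n, convexHull ℝ (F '' Set.Ici n) ⊆ Sp n := by
    intro n
    refine convexHull_min ?_ ?_
    · rintro g ⟨k, hk, rfl⟩
      refine ⟨φs k, (hφs k).1, (hφs k).2.1, (hφs k).2.2, ?_, hFcoe k⟩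
      refine (hφsle k).trans (EReal.coe_le_coe_iff.mpr ?_)
      have hk' : (1:ℝ)/(k+1) ≤ 1/(n+1) := by
        apply one_div_le_one_div_of_le (by positivity)
        have : (n:ℝ) ≤ k := Nat.cast_le.mpr hk
        linarith
      rw [hB]; simp only []; linarith
    · rintro g₁ ⟨w₁, hw₁m, hw₁01, hw₁c, hw₁ρ, hw₁ae⟩ g₂ ⟨w₂, hw₂m, hw₂01, hw₂c, hw₂ρ, hw₂ae⟩
        a b ha hb hab
      refine ⟨fun ω => a * w₁ ω + b * w₂ ω,
        (hw₁m.const_mul a).add (hw₂m.const_mul b), ?_, ?_, ?_, ?_⟩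
      · intro ω
        have h1 := hw₁01 ω; have h2 := hw₂01 ω
        constructor
        · show (0:ℝ) ≤ a * w₁ ω + b * w₂ ω
          have e1 := mul_nonneg ha h1.1
          have e2 := mul_nonneg hb h2.1
          linarith
        · show a * w₁ ω + b * w₂ ω ≤ 1
          have e1 : a * w₁ ω ≤ a * 1 := mul_le_mul_of_nonneg_left h1.2 ha
          have e2 : b * w₂ ω ≤ b * 1 := mul_le_mul_of_nonneg_left h2.2 hb
          linarith
      · intro i
        have e : (fun ω => (a * w₁ ω + b * w₂ ω) * H ω * Z i ω)
            = fun ω => a * (w₁ ω * H ω * Z i ω) + b * (w₂ ω * H ω * Z i ω) := by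
          funext ω; ring
        rw [e, integral_add ((hint1 w₁ hw₁m hw₁01 i).const_mul a)
          ((hint1 w₂ hw₂m hw₂01 i).const_mul b), integral_const_mul, integral_const_mul]
        have e1 : a * ∫ ω, w₁ ω * H ω * Z i ω ∂P ≤ a * V₀ :=
          mul_le_mul_of_nonneg_left (hw₁c i) ha
        have e2 : b * ∫ ω, w₂ ω * H ω * Z i ω ∂P ≤ b * V₀ :=
          mul_le_mul_of_nonneg_left (hw₂c i) hb
        nlinarith
      · -- risk bound via convexity
        have hb1 : b = 1 - a := by linarith
        have ha1 : a ∈ Set.Icc (0:ℝ) 1 := ⟨ha, by linarith⟩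
        have e : (fun ω => ((fun ω => a * w₁ ω + b * w₂ ω) ω - 1) * H ω)
            = fun ω => a * ((w₁ ω - 1) * H ω) + (1 - a) * ((w₂ ω - 1) * H ω) := by
          funext ω; rw [hb1]; ring
        have hcv := hconv (fun ω => (w₁ ω - 1) * H ω) (fun ω => (w₂ ω - 1) * H ω) a ha1
        have hmain : r (fun ω => a * w₁ ω + b * w₂ ω)
            ≤ (a:EReal) * r w₁ + ((1-a : ℝ):EReal) * r w₂ := by
          rw [hr]
          simp only []
          rw [e]
          exact hcv
        have h1t : r w₁ ≠ ⊤ := (lt_of_le_of_lt hw₁ρ (EReal.coe_lt_top _)).ne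
        have h2t : r w₂ ≠ ⊤ := (lt_of_le_of_lt hw₂ρ (EReal.coe_lt_top _)).ne
        have h1b : r w₁ ≠ ⊥ := by
          intro h; have := hrnn w₁ hw₁01; rw [h, le_bot_iff] at this
          exact (by simp : (0:EReal) ≠ ⊥) this
        have h2b : r w₂ ≠ ⊥ := by
          intro h; have := hrnn w₂ hw₂01; rw [h, le_bot_iff] at this
          exact (by simp : (0:EReal) ≠ ⊥) this
        have hx : ((r w₁).toReal : EReal) = r w₁ := EReal.coe_toReal h1t h1b
        have hy : ((r w₂).toReal : EReal) = r w₂ := EReal.coe_toReal h2t h2b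
        have hxB : (r w₁).toReal ≤ B n := by
          have := EReal.toReal_le_toReal hw₁ρ h1b (EReal.coe_ne_top _)
          simpa using this
        have hyB : (r w₂).toReal ≤ B n := by
          have := EReal.toReal_le_toReal hw₂ρ h2b (EReal.coe_ne_top _)
          simpa using this
        refine hmain.trans ?_
        calc (a:EReal) * r w₁ + ((1-a : ℝ):EReal) * r w₂
            = (((a * (r w₁).toReal + (1-a) * (r w₂).toReal : ℝ)) : EReal) := by
              conv_lhs => rw [← hx, ← hy]
              rw [← EReal.coe_mul, ← EReal.coe_mul, ← EReal.coe_add]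
          _ ≤ ((B n : ℝ) : EReal) := by
              refine EReal.coe_le_coe_iff.mpr ?_
              nlinarith [ha1.1, ha1.2]
      · have hadd := Lp.coeFn_add (a • g₁) (b • g₂)
        have hs1 := Lp.coeFn_smul a g₁
        have hs2 := Lp.coeFn_smul b g₂
        filter_upwards [hadd, hs1, hs2, hw₁ae, hw₂ae] with ω h1 h2 h3 h4 h5
        rw [h1, Pi.add_apply, h2, h3, Pi.smul_apply, Pi.smul_apply, smul_eq_mul,
          smul_eq_mul, h4, h5]
  have huS : ∀ n, u n ∈ Sp n := fun n => hhull n (huhull n)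
  choose w hwm hw01 hwc hwρ hwae using huS
  -- a.e. convergent subsequence
  have htim : TendstoInMeasure P (fun n => ((u n : Ω → ℝ))) atTop (vl : Ω → ℝ) :=
    tendstoInMeasure_of_tendsto_Lp hutend
  obtain ⟨ns, hns_mono, hns_ae⟩ := htim.exists_seq_tendsto_ae
  have hwae_all : ∀ᵐ ω ∂P, ∀ n, (u n : Ω → ℝ) ω = w n ω := ae_all_iff.mpr hwae
  have hvl_ae : ∀ᵐ ω ∂P, Tendsto (fun k => w (ns k) ω) atTop (nhds ((vl : Ω → ℝ) ω)) := by
    filter_upwards [hns_ae, hwae_all] with ω h1 h2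
    exact Tendsto.congr (fun k => h2 (ns k)) h1
  have hvl01 : ∀ᵐ ω ∂P, (vl : Ω → ℝ) ω ∈ Set.Icc (0:ℝ) 1 := by
    filter_upwards [hvl_ae] with ω h1
    exact isClosed_Icc.mem_of_tendsto h1 (Eventually.of_forall fun k => hw01 (ns k) ω)
  -- the optimal test
  have hmeasmk := (Lp.aestronglyMeasurable vl).aemeasurable
  set vm : Ω → ℝ := hmeasmk.mk _ with hvm
  have hvmm : Measurable vm := hmeasmk.measurable_mk
  have hvm_ae : (vl : Ω → ℝ) =ᵐ[P] vm := hmeasmk.ae_eq_mk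
  set φt : Ω → ℝ := fun ω => max 0 (min 1 (vm ω)) with hφt
  have hφtm : Measurable φt := measurable_const.max (measurable_const.min hvmm)
  have hφt01 : ∀ ω, φt ω ∈ Set.Icc (0:ℝ) 1 := fun ω =>
    ⟨le_max_left _ _, max_le zero_le_one (min_le_left _ _)⟩
  have hφt_ae : (vl : Ω → ℝ) =ᵐ[P] φt := by
    filter_upwards [hvm_ae, hvl01] with ω h1 h2
    rw [hφt]
    simp only []
    rw [← h1, min_eq_right h2.2, max_eq_right h2.1]
  have hwφt : ∀ᵐ ω ∂P, Tendsto (fun k => w (ns k) ω) atTop (nhds (φt ω)) := by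
    filter_upwards [hvl_ae, hφt_ae] with ω h1 h2
    rwa [h2] at h1
  -- constraints for φt
  have hφtc : ∀ i, ∫ ω, φt ω * H ω * Z i ω ∂P ≤ V₀ := by
    intro i
    have hDCT : Tendsto (fun k => ∫ ω, w (ns k) ω * H ω * Z i ω ∂P) atTop
        (nhds (∫ ω, φt ω * H ω * Z i ω ∂P)) := by
      refine tendsto_integral_of_dominated_convergence (fun ω => H ω * Z i ω)
        (fun k => (((hwm (ns k)).mul hHmeas).mul (hZmeas i)).aestronglyMeasurable)
        (hHZ i) (fun k => ae_of_all _ fun ω => ?_) ?_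
      · show ‖w (ns k) ω * H ω * Z i ω‖ ≤ H ω * Z i ω
        have h0 := (hw01 (ns k) ω).1; have h1 := (hw01 (ns k) ω).2
        have hH := hHpos ω; have hZ := hZpos i ω
        rw [Real.norm_eq_abs, abs_mul, abs_mul, abs_of_nonneg h0, abs_of_nonneg hH,
          abs_of_nonneg hZ]
        have e1 : w (ns k) ω * H ω ≤ 1 * H ω := mul_le_mul_of_nonneg_right h1 hH
        have e2 : w (ns k) ω * H ω * Z i ω ≤ 1 * H ω * Z i ω :=
          mul_le_mul_of_nonneg_right e1 hZ
        linarith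
      · filter_upwards [hwφt] with ω h1
        exact (h1.mul_const (H ω)).mul_const (Z i ω)
    exact le_of_tendsto hDCT (Eventually.of_forall fun k => hwc (ns k) i)
  have hφtR : φt ∈ R0 P H Z V₀ := ⟨hφtm, hφt01, hφtc⟩
  -- risk bound via lower semicontinuity
  have hρle : r φt ≤ (m : EReal) := by
    have hL1 : Tendsto (fun k => ∫ ω, |(w (ns k) ω - 1) * H ω - (φt ω - 1) * H ω| ∂P)
        atTop (nhds 0) := by
      have hDCT : Tendsto (fun k => ∫ ω, |(w (ns k) ω - 1) * H ω - (φt ω - 1) * H ω| ∂P)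
          atTop (nhds (∫ ω, |(φt ω - 1) * H ω - (φt ω - 1) * H ω| ∂P)) := by
        refine tendsto_integral_of_dominated_convergence H
          (fun k => ((((hwm (ns k)).sub measurable_const).mul hHmeas).sub
            ((hφtm.sub measurable_const).mul hHmeas)).abs.aestronglyMeasurable)
          hHint (fun k => ae_of_all _ fun ω => ?_) ?_
        · have h0 := (hw01 (ns k) ω).1; have h1 := (hw01 (ns k) ω).2
          have h0' := (hφt01 ω).1; have h1' := (hφt01 ω).2
          have hH := hHpos ω
          have e : (w (ns k) ω - 1) * H ω - (φt ω - 1) * H ω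
              = (w (ns k) ω - φt ω) * H ω := by ring
          rw [Real.norm_eq_abs, abs_abs, e, abs_mul, abs_of_nonneg hH]
          have habs : |w (ns k) ω - φt ω| ≤ 1 := abs_le.mpr ⟨by linarith, by linarith⟩
          nlinarith [abs_nonneg (w (ns k) ω - φt ω)]
        · filter_upwards [hwφt] with ω h1
          have h2 : Tendsto (fun k => (w (ns k) ω - 1) * H ω - (φt ω - 1) * H ω) atTop
              (nhds ((φt ω - 1) * H ω - (φt ω - 1) * H ω)) :=
            (((h1.sub_const 1).mul_const (H ω)).sub_const _)
          exact h2.abs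
      simpa using hDCT
    have hliminf := hlsc (fun k ω => (w (ns k) ω - 1) * H ω) (fun ω => (φt ω - 1) * H ω)
      (fun k => hint2 _ (hwm (ns k)) (hw01 (ns k))) (hint2 _ hφtm hφt01) hL1
    refine hliminf.trans ?_
    have hbd : ∀ k : ℕ, ρ (fun ω => (w (ns k) ω - 1) * H ω) ≤ ((m + 1/(k+1) : ℝ) : EReal) := by
      intro k
      refine (hwρ (ns k)).trans (EReal.coe_le_coe_iff.mpr ?_)
      have hk : (k:ℝ) ≤ ns k := Nat.cast_le.mpr hns_mono.le_apply
      have h1 : (1:ℝ)/(ns k+1) ≤ 1/(k+1) := by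
        apply one_div_le_one_div_of_le (by positivity)
        linarith
      rw [hB]; simp only []; linarith
    calc liminf (fun k => ρ (fun ω => (w (ns k) ω - 1)*H ω)) atTop
        ≤ liminf (fun k : ℕ => ((m + 1/(k+1) : ℝ) : EReal)) atTop :=
          liminf_le_liminf (Eventually.of_forall hbd)
      _ = (m : EReal) := by
          have ht : Tendsto (fun k : ℕ => ((m + 1/(k+1) : ℝ) : EReal)) atTop
              (nhds ((m:ℝ) : EReal)) := by
            rw [EReal.tendsto_coe]
            have h1 : Tendsto (fun k : ℕ => m + 1/(k+1)) atTop (nhds (m + 0)) :=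
              (tendsto_const_nhds (x := m)).add tendsto_one_div_add_atTop_nhds_zero_nat
            simpa using h1
          exact ht.liminf_eq
  -- conclusion
  refine ⟨φt, hφtR, ?_, ?_, ?_⟩
  · intro φ hφR
    exact (hρle.trans hmeq.le).trans (sInf_le ⟨φ, hφR, rfl⟩)
  · exact (hρle.trans_lt (EReal.coe_lt_top m)).ne
  · intro h
    have h0 : (0:EReal) ≤ ρ (fun ω => (φt ω - 1) * H ω) := hrnn φt hφt01
    rw [h, le_bot_iff] at h0
    exact (by simp : (0:EReal) ≠ ⊥) h0
end

section
/- Weak duality for the generalized Neyman–Pearson problem: for every probability measure Q with density Z_Q ∈ L^∞ and every finite (σ-additive, nonnegative) measure λ on (P_σ, S), sup_{φ ∈ R₀} E[φ H Z_Q] ≤ E[(H Z_Q − H ∫_{P_σ} Z_{P*} dλ(P*))⁺] + Ṽ₀ λ(P_σ). -/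
open MeasureTheory Set
open scoped ENNReal

/-- Weak duality for the generalized Neyman–Pearson problem: for every density
`Z_Q ∈ L^∞` and every finite measure `λ` on `(P_σ, S)`,
`sup_{φ ∈ R₀} E[φ H Z_Q] ≤ E[(H Z_Q − H ∫ Z_{P*} dλ)⁺] + Ṽ₀ λ(P_σ)`. -/
theorem weak_duality_neyman_pearson
    {Ω : Type*} [MeasurableSpace Ω] (P : Measure Ω) [IsProbabilityMeasure P]
    {ι : Type*} [Nonempty ι] [MeasurableSpace ι]
    (H : Ω → ℝ) (hHmeas : Measurable H) (hHint : Integrable H P)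
    (hHpos : ∀ ω, 0 ≤ H ω)
    (Z : ι → Ω → ℝ) (hZmeas : ∀ i, Measurable (Z i)) (hZpos : ∀ i ω, 0 ≤ Z i ω)
    (hZprob : ∀ i, ∫ ω, Z i ω ∂P = 1)
    (hjoint : Measurable fun p : ι × Ω => Z p.1 p.2)
    (hU₀ : BddAbove (Set.range fun i => ∫ ω, H ω * Z i ω ∂P))
    (V₀ : ℝ) (hV₀ : 0 < V₀)
    (ZQ : Ω → ℝ) (hZQmeas : Measurable ZQ) (hZQpos : ∀ ω, 0 ≤ ZQ ω)
    (hZQbdd : ∃ C, ∀ ω, ZQ ω ≤ C) (hZQprob : ∫ ω, ZQ ω ∂P = 1)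
    (μ : Measure ι) [IsFiniteMeasure μ]
    (hmix : Integrable (fun ω => H ω * ∫ i, Z i ω ∂μ) P) :
    ∀ φ ∈ R0 P H Z V₀,
      ∫ ω, φ ω * H ω * ZQ ω ∂P ≤
        (∫ ω, max (H ω * ZQ ω - H ω * ∫ i, Z i ω ∂μ) 0 ∂P)
          + V₀ * (μ Set.univ).toReal := by
  intro φ hφ
  obtain ⟨hφm, hφ01, hφc⟩ := hφ
  -- notation
  set g : Ω → ℝ := fun ω => ∫ i, Z i ω ∂μ with hgdef
  have hgnn : ∀ ω, 0 ≤ g ω := fun ω => integral_nonneg fun i => hZpos i ω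
  have hgmeas : Measurable g :=
    (hjoint.stronglyMeasurable.integral_prod_left).measurable
  have hφnn : ∀ ω, 0 ≤ φ ω := fun ω => (hφ01 ω).1
  have hφle : ∀ ω, φ ω ≤ 1 := fun ω => (hφ01 ω).2
  -- each Z i is integrable
  have hZint : ∀ i, Integrable (Z i) P := by
    intro i
    by_contra h
    have := hZprob i
    rw [integral_undef h] at this
    norm_num at this
  -- the ENNReal-valued mixture
  set F : Ω → ℝ≥0∞ := fun ω => ∫⁻ i, ENNReal.ofReal (Z i ω) ∂μ with hFdef
  have hZofm : Measurable fun p : ι × Ω => ENNReal.ofReal (Z p.1 p.2) :=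
    ENNReal.measurable_ofReal.comp hjoint
  have hFmeas : Measurable F := hZofm.lintegral_prod_left'
  -- ∫⁻ Z i dP = 1 in ENNReal
  have hZl : ∀ i, ∫⁻ ω, ENNReal.ofReal (Z i ω) ∂P = 1 := by
    intro i
    rw [← ofReal_integral_eq_lintegral_ofReal (hZint i)
      (Filter.Eventually.of_forall fun ω => hZpos i ω), hZprob i, ENNReal.ofReal_one]
  -- Tonelli: ∫⁻ F dP = μ univ < ∞, so F < ∞ a.e.
  have hswapZ : ∫⁻ ω, F ω ∂P = ∫⁻ i, ∫⁻ ω, ENNReal.ofReal (Z i ω) ∂P ∂μ := by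
    exact (lintegral_lintegral_swap (f := fun i ω => ENNReal.ofReal (Z i ω))
      hZofm.aemeasurable).symm
  have hFfin : ∫⁻ ω, F ω ∂P < ⊤ := by
    rw [hswapZ]
    simp only [hZl, lintegral_one]
    exact measure_lt_top μ univ
  have hFae : ∀ᵐ ω ∂P, F ω < ⊤ := ae_lt_top hFmeas hFfin.ne
  -- a.e., ofReal (g ω) = F ω
  have hgF : ∀ᵐ ω ∂P, ENNReal.ofReal (g ω) = F ω := by
    filter_upwards [hFae] with ω hω
    have hmZ : Measurable fun i => Z i ω := hjoint.comp measurable_prodMk_right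
    have hint : Integrable (fun i => Z i ω) μ := by
      refine ⟨hmZ.aestronglyMeasurable, ?_⟩
      rw [hasFiniteIntegral_iff_ofReal (Filter.Eventually.of_forall fun i => hZpos i ω)]
      exact hω
    exact ofReal_integral_eq_lintegral_ofReal hint
      (Filter.Eventually.of_forall fun i => hZpos i ω)
  -- finiteness of ∫⁻ ofReal (H * g)
  have hHgfin : ∫⁻ ω, ENNReal.ofReal (H ω * g ω) ∂P < ⊤ := by
    have := hmix.2
    rwa [hasFiniteIntegral_iff_ofReal
      (Filter.Eventually.of_forall fun ω => mul_nonneg (hHpos ω) (hgnn ω))] at this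
  -- key: ∫⁻ᵢ ∫⁻ ofReal (H Z i) dP dμ < ∞
  have hHZofm : Measurable fun p : ι × Ω => ENNReal.ofReal (H p.2 * Z p.1 p.2) :=
    ENNReal.measurable_ofReal.comp ((hHmeas.comp measurable_snd).mul hjoint)
  have hHF : ∀ᵐ ω ∂P, ENNReal.ofReal (H ω) * F ω = ENNReal.ofReal (H ω * g ω) := by
    filter_upwards [hgF] with ω hω
    rw [ENNReal.ofReal_mul (hHpos ω), hω]
  have hswapHZ : ∫⁻ i, ∫⁻ ω, ENNReal.ofReal (H ω * Z i ω) ∂P ∂μ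
      = ∫⁻ ω, ENNReal.ofReal (H ω * g ω) ∂P := by
    rw [lintegral_lintegral_swap (f := fun i ω => ENNReal.ofReal (H ω * Z i ω))
      hHZofm.aemeasurable]
    rw [← lintegral_congr_ae hHF]
    refine lintegral_congr fun ω => ?_
    have hmZω : Measurable fun i => ENNReal.ofReal (Z i ω) :=
      ENNReal.measurable_ofReal.comp (hjoint.comp measurable_prodMk_right)
    rw [← lintegral_const_mul _ hmZω]
    exact lintegral_congr fun i => ENNReal.ofReal_mul (hHpos ω)
  have hHZfin : ∫⁻ i, ∫⁻ ω, ENNReal.ofReal (H ω * Z i ω) ∂P ∂μ < ⊤ := by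
    rw [hswapHZ]; exact hHgfin
  -- a.e. i, H * Z i is integrable, hence the constraint gives a lintegral bound
  have haeV : ∀ᵐ i ∂μ, ∫⁻ ω, ENNReal.ofReal (φ ω * H ω * Z i ω) ∂P
      ≤ ENNReal.ofReal V₀ := by
    have hm : Measurable fun i => ∫⁻ ω, ENNReal.ofReal (H ω * Z i ω) ∂P :=
      Measurable.lintegral_prod_right (f := fun i ω => ENNReal.ofReal (H ω * Z i ω))
        hHZofm
    filter_upwards [ae_lt_top hm hHZfin.ne] with i hi
    have hHZi : Integrable (fun ω => H ω * Z i ω) P := by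
      refine ⟨(hHmeas.mul (hZmeas i)).aestronglyMeasurable, ?_⟩
      rw [hasFiniteIntegral_iff_ofReal
        (Filter.Eventually.of_forall fun ω => mul_nonneg (hHpos ω) (hZpos i ω))]
      exact hi
    have hφHZi : Integrable (fun ω => φ ω * H ω * Z i ω) P := by
      refine hHZi.mono' ((hφm.mul hHmeas).mul (hZmeas i)).aestronglyMeasurable ?_
      refine Filter.Eventually.of_forall fun ω => ?_
      have h1 : 0 ≤ φ ω * H ω * Z i ω :=
        mul_nonneg (mul_nonneg (hφnn ω) (hHpos ω)) (hZpos i ω)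
      have h2 : 0 ≤ H ω * Z i ω := mul_nonneg (hHpos ω) (hZpos i ω)
      rw [Real.norm_eq_abs, abs_of_nonneg h1]
      nlinarith [hφle ω, hφnn ω, hHpos ω, hZpos i ω]
    rw [← ofReal_integral_eq_lintegral_ofReal hφHZi
      (Filter.Eventually.of_forall fun ω =>
        mul_nonneg (mul_nonneg (hφnn ω) (hHpos ω)) (hZpos i ω))]
    exact ENNReal.ofReal_le_ofReal (hφc i)
  -- bound on ∫ φ H g
  have hφHg_int : Integrable (fun ω => φ ω * (H ω * g ω)) P := by
    refine hmix.mono' ((hφm.mul (hHmeas.mul hgmeas))).aestronglyMeasurable ?_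
    refine Filter.Eventually.of_forall fun ω => ?_
    have h2 : 0 ≤ H ω * g ω := mul_nonneg (hHpos ω) (hgnn ω)
    rw [Real.norm_eq_abs, abs_of_nonneg (mul_nonneg (hφnn ω) h2)]
    nlinarith [hφle ω, hφnn ω]
  have hstep2 : ∫ ω, φ ω * (H ω * g ω) ∂P ≤ V₀ * (μ univ).toReal := by
    have hnn : 0 ≤ᵐ[P] fun ω => φ ω * (H ω * g ω) :=
      Filter.Eventually.of_forall fun ω =>
        mul_nonneg (hφnn ω) (mul_nonneg (hHpos ω) (hgnn ω))
    have hle : ∫⁻ ω, ENNReal.ofReal (φ ω * (H ω * g ω)) ∂P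
        ≤ ENNReal.ofReal V₀ * μ univ := by
      have heq : ∫⁻ ω, ENNReal.ofReal (φ ω * (H ω * g ω)) ∂P
          = ∫⁻ i, ∫⁻ ω, ENNReal.ofReal (φ ω * H ω * Z i ω) ∂P ∂μ := by
        rw [lintegral_lintegral_swap (f := fun i ω => ENNReal.ofReal (φ ω * H ω * Z i ω))
          (ENNReal.measurable_ofReal.comp
            (((hφm.comp measurable_snd).mul (hHmeas.comp measurable_snd)).mul
              hjoint)).aemeasurable]
        refine lintegral_congr_ae ?_
        filter_upwards [hgF] with ω hω
        calc ENNReal.ofReal (φ ω * (H ω * g ω))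
            = ENNReal.ofReal (φ ω * H ω) * ENNReal.ofReal (g ω) := by
              rw [← ENNReal.ofReal_mul (mul_nonneg (hφnn ω) (hHpos ω))]; ring_nf
          _ = ENNReal.ofReal (φ ω * H ω) * F ω := by rw [hω]
          _ = ∫⁻ i, ENNReal.ofReal (φ ω * H ω) * ENNReal.ofReal (Z i ω) ∂μ := by
              have hmZω : Measurable fun i => ENNReal.ofReal (Z i ω) :=
                ENNReal.measurable_ofReal.comp (hjoint.comp measurable_prodMk_right)
              exact (lintegral_const_mul _ hmZω).symm
          _ = ∫⁻ i, ENNReal.ofReal (φ ω * H ω * Z i ω) ∂μ := by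
              refine lintegral_congr fun i => ?_
              rw [← ENNReal.ofReal_mul (mul_nonneg (hφnn ω) (hHpos ω))]
      rw [heq]
      calc ∫⁻ i, ∫⁻ ω, ENNReal.ofReal (φ ω * H ω * Z i ω) ∂P ∂μ
          ≤ ∫⁻ _, ENNReal.ofReal V₀ ∂μ := lintegral_mono_ae haeV
        _ = ENNReal.ofReal V₀ * μ univ := lintegral_const _
    rw [integral_eq_lintegral_of_nonneg_ae hnn hφHg_int.aestronglyMeasurable]
    calc (∫⁻ ω, ENNReal.ofReal (φ ω * (H ω * g ω)) ∂P).toReal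
        ≤ (ENNReal.ofReal V₀ * μ univ).toReal := by
          refine ENNReal.toReal_mono ?_ hle
          exact ENNReal.mul_ne_top ENNReal.ofReal_ne_top (measure_ne_top μ univ)
      _ = V₀ * (μ univ).toReal := by
          rw [ENNReal.toReal_mul, ENNReal.toReal_ofReal hV₀.le]
  -- integrability of the remaining pieces
  obtain ⟨C, hC⟩ := hZQbdd
  have hHZQ_int : Integrable (fun ω => H ω * ZQ ω) P := by
    refine (hHint.const_mul (max C 0)).mono'
      ((hHmeas.mul hZQmeas)).aestronglyMeasurable ?_
    refine Filter.Eventually.of_forall fun ω => ?_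
    have h1 : 0 ≤ H ω * ZQ ω := mul_nonneg (hHpos ω) (hZQpos ω)
    rw [Real.norm_eq_abs, abs_of_nonneg h1]
    have : H ω * ZQ ω ≤ H ω * max C 0 :=
      mul_le_mul_of_nonneg_left (le_max_of_le_left (hC ω)) (hHpos ω)
    linarith [this]
  have hφHZQ_int : Integrable (fun ω => φ ω * H ω * ZQ ω) P := by
    refine hHZQ_int.mono' (((hφm.mul hHmeas).mul hZQmeas)).aestronglyMeasurable ?_
    refine Filter.Eventually.of_forall fun ω => ?_
    have h1 : 0 ≤ φ ω * H ω * ZQ ω :=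
      mul_nonneg (mul_nonneg (hφnn ω) (hHpos ω)) (hZQpos ω)
    have h2 : 0 ≤ H ω * ZQ ω := mul_nonneg (hHpos ω) (hZQpos ω)
    rw [Real.norm_eq_abs, abs_of_nonneg h1]
    nlinarith [hφle ω, hφnn ω]
  have hsub_int : Integrable (fun ω => φ ω * (H ω * ZQ ω - H ω * g ω)) P := by
    have : (fun ω => φ ω * (H ω * ZQ ω - H ω * g ω))
        = fun ω => φ ω * H ω * ZQ ω - φ ω * (H ω * g ω) := by
      funext ω; ring
    rw [this]
    exact hφHZQ_int.sub hφHg_int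
  have hmax_int : Integrable (fun ω => max (H ω * ZQ ω - H ω * g ω) 0) P := by
    have hd : Integrable (fun ω => H ω * ZQ ω - H ω * g ω) P := hHZQ_int.sub hmix
    refine hd.norm.mono' (((hHmeas.mul hZQmeas).sub (hHmeas.mul hgmeas)).max
      measurable_const).aestronglyMeasurable ?_
    refine Filter.Eventually.of_forall fun ω => ?_
    simp only [Real.norm_eq_abs]
    rw [abs_of_nonneg (le_max_right _ _)]
    exact max_le (le_abs_self _) (abs_nonneg _)
  -- pointwise bound and splitting
  have hptw : ∀ ω, φ ω * (H ω * ZQ ω - H ω * g ω) ≤ max (H ω * ZQ ω - H ω * g ω) 0 := by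
    intro ω
    rcases le_or_gt 0 (H ω * ZQ ω - H ω * g ω) with h | h
    · calc φ ω * (H ω * ZQ ω - H ω * g ω) ≤ 1 * (H ω * ZQ ω - H ω * g ω) :=
        mul_le_mul_of_nonneg_right (hφle ω) h
      _ = H ω * ZQ ω - H ω * g ω := one_mul _
      _ ≤ max (H ω * ZQ ω - H ω * g ω) 0 := le_max_left _ _
    · calc φ ω * (H ω * ZQ ω - H ω * g ω) ≤ 0 :=
        mul_nonpos_of_nonneg_of_nonpos (hφnn ω) h.le
      _ ≤ max (H ω * ZQ ω - H ω * g ω) 0 := le_max_right _ _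
  have hsplit : ∫ ω, φ ω * H ω * ZQ ω ∂P
      = ∫ ω, φ ω * (H ω * ZQ ω - H ω * g ω) ∂P + ∫ ω, φ ω * (H ω * g ω) ∂P := by
    rw [← integral_add hsub_int hφHg_int]
    refine integral_congr_ae (Filter.Eventually.of_forall fun ω => ?_)
    ring
  have hstep1 : ∫ ω, φ ω * (H ω * ZQ ω - H ω * g ω) ∂P
      ≤ ∫ ω, max (H ω * ZQ ω - H ω * g ω) 0 ∂P :=
    integral_mono hsub_int hmax_int hptw
  rw [hsplit]
  exact add_le_add hstep1 hstep2
end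

section
/- Complementary slackness characterization of optimal tests: let Q have density Z_Q ∈ L^∞ and λ̃ be a finite measure on (P_σ,S) such that the primal value sup_{φ∈R₀} E[φHZ_Q] equals the dual value E[(HZ_Q − H∫Z_{P*}dλ̃)⁺] + Ṽ₀ λ̃(P_σ). Then φ̃ ∈ R₀ is optimal for the primal if and only if: (i) φ̃ = 1 P-a.s. on {HZ_Q > H∫_{P_σ} Z_{P*} dλ̃}, (ii) φ̃ = 0 P-a.s. on {HZ_Q < H∫_{P_σ} Z_{P*} dλ̃}, and (iii) E^{P*}[φ̃H] = Ṽ₀ for λ̃-almost every P*. -/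
open MeasureTheory Set
open scoped ENNReal

lemma aux_fubini
    {Ω : Type*} [MeasurableSpace Ω] (P : Measure Ω) [IsProbabilityMeasure P]
    {ι : Type*} [MeasurableSpace ι]
    (H : Ω → ℝ) (hHmeas : Measurable H) (hHpos : ∀ ω, 0 ≤ H ω)
    (Z : ι → Ω → ℝ) (hZmeas : ∀ i, Measurable (Z i)) (hZpos : ∀ i ω, 0 ≤ Z i ω)
    (hZprob : ∀ i, ∫ ω, Z i ω ∂P = 1)
    (hjoint : Measurable fun p : ι × Ω => Z p.1 p.2)
    (μ : Measure ι) [IsFiniteMeasure μ]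
    (hmix : Integrable (fun ω => H ω * ∫ i, Z i ω ∂μ) P)
    (φ : Ω → ℝ) (hφm : Measurable φ) (hφ01 : ∀ ω, φ ω ∈ Set.Icc (0 : ℝ) 1) :
    ∫ ω, φ ω * H ω * (∫ i, Z i ω ∂μ) ∂P = ∫ i, (∫ ω, φ ω * H ω * Z i ω ∂P) ∂μ := by
  have hsec : ∀ ω, Measurable fun i => Z i ω := fun ω =>
    hjoint.comp (measurable_id.prodMk measurable_const)
  have hφ0 : ∀ ω, 0 ≤ φ ω := fun ω => (hφ01 ω).1
  have hφ1 : ∀ ω, φ ω ≤ 1 := fun ω => (hφ01 ω).2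
  -- L and m
  set L : Ω → ℝ≥0∞ := fun ω => ∫⁻ i, ENNReal.ofReal (Z i ω) ∂μ with hL
  have hLmeas : Measurable L := by
    apply Measurable.lintegral_prod_right (f := fun ω i => ENNReal.ofReal (Z i ω))
    exact ENNReal.measurable_ofReal.comp (hjoint.comp measurable_swap)
  have hm_eq : ∀ ω, ∫ i, Z i ω ∂μ = (L ω).toReal := by
    intro ω
    rw [integral_eq_lintegral_of_nonneg_ae (ae_of_all _ fun i => hZpos i ω)
      (hsec ω).aestronglyMeasurable]
  -- Z i integrable wrt P, lintegral = 1
  have hZint : ∀ i, Integrable (Z i) P := by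
    intro i
    by_contra h
    have h2 := hZprob i
    rw [integral_undef h] at h2
    exact one_ne_zero h2.symm
  have hZlint : ∀ i, ∫⁻ ω, ENNReal.ofReal (Z i ω) ∂P = 1 := by
    intro i
    rw [← ofReal_integral_eq_lintegral_ofReal (hZint i) (ae_of_all _ (hZpos i)),
      hZprob i, ENNReal.ofReal_one]
  -- generic swap for nonneg weights
  have hswap : ∀ ψ : Ω → ℝ, Measurable ψ → (∀ ω, 0 ≤ ψ ω) →
      ∫⁻ ω, ENNReal.ofReal (ψ ω) * L ω ∂P
        = ∫⁻ i, ∫⁻ ω, ENNReal.ofReal (ψ ω * Z i ω) ∂P ∂μ := by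
    intro ψ hψm hψ0
    have h1 : ∀ ω, ENNReal.ofReal (ψ ω) * L ω
        = ∫⁻ i, ENNReal.ofReal (ψ ω * Z i ω) ∂μ := by
      intro ω
      simp_rw [ENNReal.ofReal_mul (hψ0 ω)]
      rw [lintegral_const_mul _ ((hsec ω).ennreal_ofReal)]
    simp_rw [h1]
    exact lintegral_lintegral_swap
      ((ENNReal.measurable_ofReal.comp
        ((hψm.comp measurable_fst).mul (hjoint.comp measurable_swap))).aemeasurable)
  -- a.e. finiteness of L
  have hLfin : ∀ᵐ ω ∂P, L ω < ⊤ := by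
    have h1 : ∫⁻ ω, L ω ∂P = μ Set.univ := by
      have := hswap (fun _ => 1) measurable_const (fun _ => zero_le_one)
      simp only [ENNReal.ofReal_one, one_mul] at this
      rw [this]
      simp [hZlint]
    refine ae_lt_top hLmeas ?_
    rw [h1]
    exact (measure_lt_top μ _).ne
  -- finiteness of the weighted lintegral
  have hHL : ∫⁻ ω, ENNReal.ofReal (H ω) * L ω ∂P ≠ ⊤ := by
    have h1 : (fun ω => ENNReal.ofReal (H ω) * L ω)
        =ᵐ[P] fun ω => ENNReal.ofReal (H ω * (L ω).toReal) := by
      filter_upwards [hLfin] with ω hω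
      rw [ENNReal.ofReal_mul (hHpos ω), ENNReal.ofReal_toReal hω.ne]
    rw [lintegral_congr_ae h1]
    have h2 : Integrable (fun ω => H ω * (L ω).toReal) P := by
      refine hmix.congr ?_
      exact ae_of_all _ fun ω => by
        show H ω * ∫ i, Z i ω ∂μ = H ω * (L ω).toReal
        rw [hm_eq ω]
    exact h2.lintegral_lt_top.ne
  -- main quantity
  set S : ℝ≥0∞ := ∫⁻ i, ∫⁻ ω, ENNReal.ofReal (φ ω * H ω * Z i ω) ∂P ∂μ with hS
  have hSswap : S = ∫⁻ ω, ENNReal.ofReal (φ ω * H ω) * L ω ∂P :=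
    (hswap (fun ω => φ ω * H ω) (hφm.mul hHmeas)
      (fun ω => mul_nonneg (hφ0 ω) (hHpos ω))).symm
  have hSfin : S ≠ ⊤ := by
    rw [hSswap]
    refine ne_top_of_le_ne_top hHL (lintegral_mono fun ω => ?_)
    exact mul_le_mul_left
      (ENNReal.ofReal_le_ofReal (by nlinarith [hφ1 ω, hφ0 ω, hHpos ω])) _
  -- LHS = S.toReal
  have hmmeas : Measurable fun ω => ∫ i, Z i ω ∂μ := by
    have : (fun ω => ∫ i, Z i ω ∂μ) = fun ω => (L ω).toReal := funext hm_eq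
    rw [this]; exact hLmeas.ennreal_toReal
  have hLHS : ∫ ω, φ ω * H ω * (∫ i, Z i ω ∂μ) ∂P = S.toReal := by
    rw [integral_eq_lintegral_of_nonneg_ae
      (ae_of_all _ fun ω => mul_nonneg (mul_nonneg (hφ0 ω) (hHpos ω))
        (integral_nonneg fun i => hZpos i ω))
      ((hφm.mul hHmeas).mul hmmeas).aestronglyMeasurable]
    congr 1
    rw [hSswap]
    refine lintegral_congr_ae ?_
    filter_upwards [hLfin] with ω hω
    rw [hm_eq ω, ENNReal.ofReal_mul (mul_nonneg (hφ0 ω) (hHpos ω)),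
      ENNReal.ofReal_toReal hω.ne]
  -- RHS = S.toReal
  set G : ι → ℝ≥0∞ := fun i => ∫⁻ ω, ENNReal.ofReal (φ ω * H ω * Z i ω) ∂P with hG
  have hGmeas : Measurable G := by
    apply Measurable.lintegral_prod_right
      (f := fun i ω => ENNReal.ofReal (φ ω * H ω * Z i ω))
    exact ENNReal.measurable_ofReal.comp
      (((hφm.comp measurable_snd).mul (hHmeas.comp measurable_snd)).mul hjoint)
  have hGfin : ∀ᵐ i ∂μ, G i < ⊤ := ae_lt_top hGmeas hSfin
  have hg_eq : ∀ i, ∫ ω, φ ω * H ω * Z i ω ∂P = (G i).toReal := by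
    intro i
    rw [integral_eq_lintegral_of_nonneg_ae
      (ae_of_all _ fun ω => mul_nonneg (mul_nonneg (hφ0 ω) (hHpos ω)) (hZpos i ω))
      (((hφm.mul hHmeas).mul (hZmeas i)).aestronglyMeasurable)]
  rw [hLHS]
  simp_rw [hg_eq]
  rw [integral_eq_lintegral_of_nonneg_ae (ae_of_all _ fun i => ENNReal.toReal_nonneg)
    hGmeas.ennreal_toReal.aestronglyMeasurable]
  congr 1
  refine (lintegral_congr_ae ?_).symm
  filter_upwards [hGfin] with i hi
  rw [ENNReal.ofReal_toReal hi.ne]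


lemma aux_m_meas
    {Ω : Type*} [MeasurableSpace Ω]
    {ι : Type*} [MeasurableSpace ι]
    (Z : ι → Ω → ℝ) (hZpos : ∀ i ω, 0 ≤ Z i ω)
    (hjoint : Measurable fun p : ι × Ω => Z p.1 p.2)
    (μ : Measure ι) [IsFiniteMeasure μ] :
    Measurable fun ω => ∫ i, Z i ω ∂μ := by
  have hsec : ∀ ω, Measurable fun i => Z i ω := fun ω =>
    hjoint.comp (measurable_id.prodMk measurable_const)
  have hm_eq : ∀ ω, ∫ i, Z i ω ∂μ = (∫⁻ i, ENNReal.ofReal (Z i ω) ∂μ).toReal := by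
    intro ω
    rw [integral_eq_lintegral_of_nonneg_ae (ae_of_all _ fun i => hZpos i ω)
      (hsec ω).aestronglyMeasurable]
  have hLmeas : Measurable fun ω => ∫⁻ i, ENNReal.ofReal (Z i ω) ∂μ := by
    apply Measurable.lintegral_prod_right (f := fun ω i => ENNReal.ofReal (Z i ω))
    exact ENNReal.measurable_ofReal.comp (hjoint.comp measurable_swap)
  simpa [funext hm_eq] using hLmeas.ennreal_toReal

lemma aux_g_meas
    {Ω : Type*} [MeasurableSpace Ω] (P : Measure Ω) [IsProbabilityMeasure P]
    {ι : Type*} [MeasurableSpace ι]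
    (H : Ω → ℝ) (hHmeas : Measurable H) (hHpos : ∀ ω, 0 ≤ H ω)
    (Z : ι → Ω → ℝ) (hZmeas : ∀ i, Measurable (Z i)) (hZpos : ∀ i ω, 0 ≤ Z i ω)
    (hjoint : Measurable fun p : ι × Ω => Z p.1 p.2)
    (φ : Ω → ℝ) (hφm : Measurable φ) (hφ0 : ∀ ω, 0 ≤ φ ω) :
    Measurable fun i => ∫ ω, φ ω * H ω * Z i ω ∂P := by
  have hg_eq : ∀ i, ∫ ω, φ ω * H ω * Z i ω ∂P
      = (∫⁻ ω, ENNReal.ofReal (φ ω * H ω * Z i ω) ∂P).toReal := by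
    intro i
    rw [integral_eq_lintegral_of_nonneg_ae
      (ae_of_all _ fun ω => mul_nonneg (mul_nonneg (hφ0 ω) (hHpos ω)) (hZpos i ω))
      (((hφm.mul hHmeas).mul (hZmeas i)).aestronglyMeasurable)]
  have hGmeas : Measurable fun i => ∫⁻ ω, ENNReal.ofReal (φ ω * H ω * Z i ω) ∂P := by
    apply Measurable.lintegral_prod_right
      (f := fun i ω => ENNReal.ofReal (φ ω * H ω * Z i ω))
    exact ENNReal.measurable_ofReal.comp
      (((hφm.comp measurable_snd).mul (hHmeas.comp measurable_snd)).mul hjoint)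
  simpa [funext hg_eq] using hGmeas.ennreal_toReal


/-- Complementary slackness: if strong duality holds between the primal
`sup_{φ∈R₀} E[φHZ_Q]` and the dual at `λ̃`, then `φ̃ ∈ R₀` is optimal iff
`φ̃ = 1` a.s. on `{HZ_Q > H∫Z_{P*}dλ̃}`, `φ̃ = 0` a.s. on
`{HZ_Q < H∫Z_{P*}dλ̃}`, and `E^{P*}[φ̃H] = Ṽ₀` for `λ̃`-a.e. `P*`. -/
theorem complementary_slackness_optimal_tests
    {Ω : Type*} [MeasurableSpace Ω] (P : Measure Ω) [IsProbabilityMeasure P]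
    {ι : Type*} [Nonempty ι] [MeasurableSpace ι]
    (H : Ω → ℝ) (hHmeas : Measurable H) (hHint : Integrable H P)
    (hHpos : ∀ ω, 0 ≤ H ω)
    (Z : ι → Ω → ℝ) (hZmeas : ∀ i, Measurable (Z i)) (hZpos : ∀ i ω, 0 ≤ Z i ω)
    (hZprob : ∀ i, ∫ ω, Z i ω ∂P = 1)
    (hjoint : Measurable fun p : ι × Ω => Z p.1 p.2)
    (hsup : ∃ C, ∀ i, ∫ ω, H ω * Z i ω ∂P ≤ C)
    (V₀ : ℝ) (hV₀ : 0 < V₀)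
    (ZQ : Ω → ℝ) (hZQmeas : Measurable ZQ) (hZQpos : ∀ ω, 0 ≤ ZQ ω)
    (hZQbdd : ∃ C, ∀ ω, ZQ ω ≤ C) (hZQprob : ∫ ω, ZQ ω ∂P = 1)
    (μ : Measure ι) [IsFiniteMeasure μ]
    (hmix : Integrable (fun ω => H ω * ∫ i, Z i ω ∂μ) P)
    (hdual : sSup ((fun φ : Ω → ℝ => ∫ ω, φ ω * H ω * ZQ ω ∂P) '' R0 P H Z V₀)
      = (∫ ω, max (H ω * ZQ ω - H ω * ∫ i, Z i ω ∂μ) 0 ∂P)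
          + V₀ * (μ Set.univ).toReal) :
    ∀ φt ∈ R0 P H Z V₀,
      ((∀ φ ∈ R0 P H Z V₀,
          ∫ ω, φ ω * H ω * ZQ ω ∂P ≤ ∫ ω, φt ω * H ω * ZQ ω ∂P) ↔
        ((∀ᵐ ω ∂P, H ω * (∫ i, Z i ω ∂μ) < H ω * ZQ ω → φt ω = 1) ∧
         (∀ᵐ ω ∂P, H ω * ZQ ω < H ω * (∫ i, Z i ω ∂μ) → φt ω = 0) ∧
         (∀ᵐ i ∂μ, ∫ ω, φt ω * H ω * Z i ω ∂P = V₀))) := by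
  intro φt hφt
  obtain ⟨hφtm, hφt01, hφtV⟩ := hφt
  obtain ⟨CQ, hCQ⟩ := hZQbdd
  have hm_nonneg : ∀ ω, 0 ≤ ∫ i, Z i ω ∂μ := fun ω => integral_nonneg fun i => hZpos i ω
  have hm_meas : Measurable fun ω => ∫ i, Z i ω ∂μ := aux_m_meas Z hZpos hjoint μ
  have hνp_meas : Measurable fun ω => max (H ω * ZQ ω - H ω * ∫ i, Z i ω ∂μ) 0 :=
    ((hHmeas.mul hZQmeas).sub (hHmeas.mul hm_meas)).max measurable_const
  have hνm_meas : Measurable fun ω => max (H ω * (∫ i, Z i ω ∂μ) - H ω * ZQ ω) 0 :=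
    ((hHmeas.mul hm_meas).sub (hHmeas.mul hZQmeas)).max measurable_const
  have hHZQ_int : Integrable (fun ω => H ω * ZQ ω) P := by
    refine (hHint.const_mul CQ).mono
      ((hHmeas.mul hZQmeas).aestronglyMeasurable) (ae_of_all _ fun ω => ?_)
    have h0 : 0 ≤ H ω * ZQ ω := mul_nonneg (hHpos ω) (hZQpos ω)
    have h1 : H ω * ZQ ω ≤ CQ * H ω := by nlinarith [hHpos ω, hCQ ω, hZQpos ω]
    rw [Real.norm_eq_abs, abs_of_nonneg h0, Real.norm_eq_abs]
    exact h1.trans (le_abs_self _)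
  have hν_int : Integrable (fun ω => H ω * ZQ ω - H ω * ∫ i, Z i ω ∂μ) P :=
    hHZQ_int.sub hmix
  have hνp_int : Integrable (fun ω => max (H ω * ZQ ω - H ω * ∫ i, Z i ω ∂μ) 0) P :=
    hν_int.pos_part
  have hνm_int : Integrable (fun ω => max (H ω * (∫ i, Z i ω ∂μ) - H ω * ZQ ω) 0) P := by
    simpa [neg_sub] using hν_int.neg.pos_part
  -- integrability facts depending on a test φ
  have int1 : ∀ φ : Ω → ℝ, Measurable φ → (∀ ω, φ ω ∈ Set.Icc (0:ℝ) 1) →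
      Integrable (fun ω => (1 - φ ω) * max (H ω * ZQ ω - H ω * ∫ i, Z i ω ∂μ) 0) P := by
    intro φ hφm hφ01
    refine hνp_int.mono ((measurable_const.sub hφm).mul hνp_meas).aestronglyMeasurable
      (ae_of_all _ fun ω => ?_)
    rw [Real.norm_eq_abs, Real.norm_eq_abs, abs_mul]
    have h1 : |1 - φ ω| ≤ 1 := by
      rw [abs_le]; constructor <;> [linarith [(hφ01 ω).2]; linarith [(hφ01 ω).1]]
    nlinarith [abs_nonneg (max (H ω * ZQ ω - H ω * ∫ i, Z i ω ∂μ) 0)]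
  have int2 : ∀ φ : Ω → ℝ, Measurable φ → (∀ ω, φ ω ∈ Set.Icc (0:ℝ) 1) →
      Integrable (fun ω => φ ω * max (H ω * (∫ i, Z i ω ∂μ) - H ω * ZQ ω) 0) P := by
    intro φ hφm hφ01
    refine hνm_int.mono (hφm.mul hνm_meas).aestronglyMeasurable (ae_of_all _ fun ω => ?_)
    rw [Real.norm_eq_abs, Real.norm_eq_abs, abs_mul]
    have h1 : |φ ω| ≤ 1 := by
      rw [abs_le]; constructor <;> [linarith [(hφ01 ω).1]; linarith [(hφ01 ω).2]]
    nlinarith [abs_nonneg (max (H ω * (∫ i, Z i ω ∂μ) - H ω * ZQ ω) 0)]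
  have intφν : ∀ φ : Ω → ℝ, Measurable φ → (∀ ω, φ ω ∈ Set.Icc (0:ℝ) 1) →
      Integrable (fun ω => φ ω * (H ω * ZQ ω - H ω * ∫ i, Z i ω ∂μ)) P := by
    intro φ hφm hφ01
    refine hν_int.mono (hφm.mul ((hHmeas.mul hZQmeas).sub
      (hHmeas.mul hm_meas))).aestronglyMeasurable (ae_of_all _ fun ω => ?_)
    rw [Real.norm_eq_abs, Real.norm_eq_abs, abs_mul]
    have h1 : |φ ω| ≤ 1 := by
      rw [abs_le]; constructor <;> [linarith [(hφ01 ω).1]; linarith [(hφ01 ω).2]]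
    nlinarith [abs_nonneg (H ω * ZQ ω - H ω * ∫ i, Z i ω ∂μ)]
  have intφHm : ∀ φ : Ω → ℝ, Measurable φ → (∀ ω, φ ω ∈ Set.Icc (0:ℝ) 1) →
      Integrable (fun ω => φ ω * H ω * (∫ i, Z i ω ∂μ)) P := by
    intro φ hφm hφ01
    refine hmix.mono ((hφm.mul hHmeas).mul hm_meas).aestronglyMeasurable
      (ae_of_all _ fun ω => ?_)
    have h0 : 0 ≤ H ω * ∫ i, Z i ω ∂μ := mul_nonneg (hHpos ω) (hm_nonneg ω)
    have h2 : 0 ≤ φ ω * H ω * ∫ i, Z i ω ∂μ :=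
      mul_nonneg (mul_nonneg (hφ01 ω).1 (hHpos ω)) (hm_nonneg ω)
    rw [Real.norm_eq_abs, abs_of_nonneg h2, Real.norm_eq_abs, abs_of_nonneg h0]
    nlinarith [(hφ01 ω).1, (hφ01 ω).2, hHpos ω, hm_nonneg ω]
  have hg_int : ∀ φ : Ω → ℝ, Measurable φ → (∀ ω, φ ω ∈ Set.Icc (0:ℝ) 1) →
      (∀ i, ∫ ω, φ ω * H ω * Z i ω ∂P ≤ V₀) →
      Integrable (fun i => ∫ ω, φ ω * H ω * Z i ω ∂P) μ := by
    intro φ hφm hφ01 hφV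
    refine (integrable_const V₀).mono
      (aux_g_meas P H hHmeas hHpos Z hZmeas hZpos hjoint φ hφm
        (fun ω => (hφ01 ω).1)).aestronglyMeasurable (ae_of_all _ fun i => ?_)
    have h0 : 0 ≤ ∫ ω, φ ω * H ω * Z i ω ∂P :=
      integral_nonneg fun ω => mul_nonneg (mul_nonneg (hφ01 ω).1 (hHpos ω)) (hZpos i ω)
    rw [Real.norm_eq_abs, abs_of_nonneg h0, Real.norm_eq_abs, abs_of_pos hV₀]
    exact hφV i
  -- gap identity
  have gap : ∀ φ : Ω → ℝ, Measurable φ → (∀ ω, φ ω ∈ Set.Icc (0:ℝ) 1) →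
      (∀ i, ∫ ω, φ ω * H ω * Z i ω ∂P ≤ V₀) →
      (∫ ω, max (H ω * ZQ ω - H ω * ∫ i, Z i ω ∂μ) 0 ∂P) + V₀ * (μ Set.univ).toReal
        - ∫ ω, φ ω * H ω * ZQ ω ∂P
      = (∫ ω, (1 - φ ω) * max (H ω * ZQ ω - H ω * ∫ i, Z i ω ∂μ) 0 ∂P)
        + (∫ ω, φ ω * max (H ω * (∫ i, Z i ω ∂μ) - H ω * ZQ ω) 0 ∂P)
        + ∫ i, (V₀ - ∫ ω, φ ω * H ω * Z i ω ∂P) ∂μ := by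
    intro φ hφm hφ01 hφV
    have e1 : ∫ ω, φ ω * H ω * ZQ ω ∂P
        = (∫ ω, φ ω * (H ω * ZQ ω - H ω * ∫ i, Z i ω ∂μ) ∂P)
          + ∫ ω, φ ω * H ω * (∫ i, Z i ω ∂μ) ∂P := by
      rw [← integral_add (intφν φ hφm hφ01) (intφHm φ hφm hφ01)]
      congr 1; funext ω; ring
    have e2 := aux_fubini P H hHmeas hHpos Z hZmeas hZpos hZprob hjoint μ hmix φ hφm hφ01
    have e3 : ∫ i, (V₀ - ∫ ω, φ ω * H ω * Z i ω ∂P) ∂μ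
        = V₀ * (μ Set.univ).toReal - ∫ i, (∫ ω, φ ω * H ω * Z i ω ∂P) ∂μ := by
      rw [integral_sub (integrable_const V₀) (hg_int φ hφm hφ01 hφV), integral_const,
        smul_eq_mul, measureReal_def]
      ring
    have e4 : (∫ ω, max (H ω * ZQ ω - H ω * ∫ i, Z i ω ∂μ) 0 ∂P)
          - ∫ ω, φ ω * (H ω * ZQ ω - H ω * ∫ i, Z i ω ∂μ) ∂P
        = (∫ ω, (1 - φ ω) * max (H ω * ZQ ω - H ω * ∫ i, Z i ω ∂μ) 0 ∂P)
          + ∫ ω, φ ω * max (H ω * (∫ i, Z i ω ∂μ) - H ω * ZQ ω) 0 ∂P := by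
      rw [← integral_add (int1 φ hφm hφ01) (int2 φ hφm hφ01),
        ← integral_sub hνp_int (intφν φ hφm hφ01)]
      congr 1; funext ω
      rcases le_total (H ω * ZQ ω - H ω * ∫ i, Z i ω ∂μ) 0 with h | h
      · rw [max_eq_right h, max_eq_left (by linarith)]; ring
      · rw [max_eq_left h, max_eq_right (by linarith)]; ring
    rw [e1, e3, ← e2]
    linarith [e4]
  -- upper bound
  have hbound : ∀ φ ∈ R0 P H Z V₀, ∫ ω, φ ω * H ω * ZQ ω ∂P
      ≤ (∫ ω, max (H ω * ZQ ω - H ω * ∫ i, Z i ω ∂μ) 0 ∂P) + V₀ * (μ Set.univ).toReal := by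
    rintro φ ⟨hφm, hφ01, hφV⟩
    have hgap := gap φ hφm hφ01 hφV
    have t1 : 0 ≤ ∫ ω, (1 - φ ω) * max (H ω * ZQ ω - H ω * ∫ i, Z i ω ∂μ) 0 ∂P :=
      integral_nonneg fun ω => mul_nonneg (by linarith [(hφ01 ω).2]) (le_max_right _ _)
    have t2 : 0 ≤ ∫ ω, φ ω * max (H ω * (∫ i, Z i ω ∂μ) - H ω * ZQ ω) 0 ∂P :=
      integral_nonneg fun ω => mul_nonneg (hφ01 ω).1 (le_max_right _ _)
    have t3 : 0 ≤ ∫ i, (V₀ - ∫ ω, φ ω * H ω * Z i ω ∂P) ∂μ :=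
      integral_nonneg fun i => sub_nonneg.2 (hφV i)
    linarith
  have h0mem : (fun _ : Ω => (0:ℝ)) ∈ R0 P H Z V₀ := by
    refine ⟨measurable_const, fun ω => ⟨le_refl 0, zero_le_one⟩, fun i => ?_⟩
    simp [hV₀.le]
  constructor
  · -- optimal implies slackness
    intro hopt
    have hval : ∫ ω, φt ω * H ω * ZQ ω ∂P
        = (∫ ω, max (H ω * ZQ ω - H ω * ∫ i, Z i ω ∂μ) 0 ∂P) + V₀ * (μ Set.univ).toReal := by
      refine le_antisymm (hbound φt ⟨hφtm, hφt01, hφtV⟩) ?_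
      rw [← hdual]
      refine csSup_le ⟨_, ⟨_, h0mem, rfl⟩⟩ ?_
      rintro x ⟨φ, hφ, rfl⟩
      exact hopt φ hφ
    have hgap := gap φt hφtm hφt01 hφtV
    rw [hval] at hgap
    have t1 : 0 ≤ ∫ ω, (1 - φt ω) * max (H ω * ZQ ω - H ω * ∫ i, Z i ω ∂μ) 0 ∂P :=
      integral_nonneg fun ω => mul_nonneg (by linarith [(hφt01 ω).2]) (le_max_right _ _)
    have t2 : 0 ≤ ∫ ω, φt ω * max (H ω * (∫ i, Z i ω ∂μ) - H ω * ZQ ω) 0 ∂P :=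
      integral_nonneg fun ω => mul_nonneg (hφt01 ω).1 (le_max_right _ _)
    have t3 : 0 ≤ ∫ i, (V₀ - ∫ ω, φt ω * H ω * Z i ω ∂P) ∂μ :=
      integral_nonneg fun i => sub_nonneg.2 (hφtV i)
    have hT1 : ∫ ω, (1 - φt ω) * max (H ω * ZQ ω - H ω * ∫ i, Z i ω ∂μ) 0 ∂P = 0 := by
      linarith
    have hT2 : ∫ ω, φt ω * max (H ω * (∫ i, Z i ω ∂μ) - H ω * ZQ ω) 0 ∂P = 0 := by
      linarith
    have hT3 : ∫ i, (V₀ - ∫ ω, φt ω * H ω * Z i ω ∂P) ∂μ = 0 := by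
      linarith
    refine ⟨?_, ?_, ?_⟩
    · have hz := (integral_eq_zero_iff_of_nonneg_ae
        (ae_of_all _ fun ω => mul_nonneg (by linarith [(hφt01 ω).2] : (0:ℝ) ≤ 1 - φt ω)
          (le_max_right _ _))
        (int1 φt hφtm hφt01)).1 hT1
      filter_upwards [hz] with ω hω hlt
      have hpos : 0 < max (H ω * ZQ ω - H ω * ∫ i, Z i ω ∂μ) 0 := by
        rw [max_eq_left (by linarith)]; linarith
      have hω' : (1 - φt ω) * max (H ω * ZQ ω - H ω * ∫ i, Z i ω ∂μ) 0 = 0 := hω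
      rcases mul_eq_zero.1 hω' with h | h
      · linarith
      · exact absurd h hpos.ne'
    · have hz := (integral_eq_zero_iff_of_nonneg_ae
        (ae_of_all _ fun ω => mul_nonneg (hφt01 ω).1 (le_max_right _ _))
        (int2 φt hφtm hφt01)).1 hT2
      filter_upwards [hz] with ω hω hlt
      have hpos : 0 < max (H ω * (∫ i, Z i ω ∂μ) - H ω * ZQ ω) 0 := by
        rw [max_eq_left (by linarith)]; linarith
      have hω' : φt ω * max (H ω * (∫ i, Z i ω ∂μ) - H ω * ZQ ω) 0 = 0 := hω
      rcases mul_eq_zero.1 hω' with h | h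
      · exact h
      · exact absurd h hpos.ne'
    · have hint : Integrable (fun i => V₀ - ∫ ω, φt ω * H ω * Z i ω ∂P) μ :=
        (integrable_const V₀).sub (hg_int φt hφtm hφt01 hφtV)
      have hz := (integral_eq_zero_iff_of_nonneg_ae
        (ae_of_all _ fun i => sub_nonneg.2 (hφtV i)) hint).1 hT3
      filter_upwards [hz] with i hi
      have hi' : V₀ - ∫ ω, φt ω * H ω * Z i ω ∂P = 0 := hi
      linarith
  · -- slackness implies optimal
    rintro ⟨h1, h2, h3⟩ φ hφ
    have hT1 : ∫ ω, (1 - φt ω) * max (H ω * ZQ ω - H ω * ∫ i, Z i ω ∂μ) 0 ∂P = 0 := by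
      have hz : (fun ω => (1 - φt ω) * max (H ω * ZQ ω - H ω * ∫ i, Z i ω ∂μ) 0)
          =ᵐ[P] 0 := by
        filter_upwards [h1] with ω hω
        by_cases hlt : H ω * (∫ i, Z i ω ∂μ) < H ω * ZQ ω
        · simp [hω hlt]
        · have : max (H ω * ZQ ω - H ω * ∫ i, Z i ω ∂μ) 0 = 0 :=
            max_eq_right (by push_neg at hlt; linarith)
          simp [this]
      rw [integral_congr_ae hz]; simp
    have hT2 : ∫ ω, φt ω * max (H ω * (∫ i, Z i ω ∂μ) - H ω * ZQ ω) 0 ∂P = 0 := by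
      have hz : (fun ω => φt ω * max (H ω * (∫ i, Z i ω ∂μ) - H ω * ZQ ω) 0) =ᵐ[P] 0 := by
        filter_upwards [h2] with ω hω
        by_cases hlt : H ω * ZQ ω < H ω * (∫ i, Z i ω ∂μ)
        · simp [hω hlt]
        · have : max (H ω * (∫ i, Z i ω ∂μ) - H ω * ZQ ω) 0 = 0 :=
            max_eq_right (by push_neg at hlt; linarith)
          simp [this]
      rw [integral_congr_ae hz]; simp
    have hT3 : ∫ i, (V₀ - ∫ ω, φt ω * H ω * Z i ω ∂P) ∂μ = 0 := by
      have hz : (fun i => V₀ - ∫ ω, φt ω * H ω * Z i ω ∂P) =ᵐ[μ] 0 := by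
        filter_upwards [h3] with i hi
        simp [hi]
      rw [integral_congr_ae hz]; simp
    have hgap := gap φt hφtm hφt01 hφtV
    rw [hT1, hT2, hT3] at hgap
    have hval : ∫ ω, φt ω * H ω * ZQ ω ∂P
        = (∫ ω, max (H ω * ZQ ω - H ω * ∫ i, Z i ω ∂μ) 0 ∂P) + V₀ * (μ Set.univ).toReal := by
      linarith
    rw [hval]
    exact hbound φ hφ
end

section
/- The difference between dual objective and primal objective decomposes into nonnegative parts: for any φ ∈ R₀ and any finite measure λ on (P_σ,S), with ν_λ = HZ_Q − H∫_{P_σ}Z_{P*}dλ, one has [E[ν_λ⁺] + Ṽ₀λ(P_σ)] − E[φHZ_Q] = E[(1−φ)ν_λ⁺] + E[φν_λ⁻] + ∫_{P_σ}(Ṽ₀ − E^{P*}[φH]) dλ(P*), and each of the three summands on the right is nonnegative. -/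
open MeasureTheory Set

/-- The primal-dual gap decomposes into three nonnegative parts: for `φ ∈ R₀`
and a finite measure `λ`, with `ν_λ = HZ_Q − H∫Z_{P*}dλ`,
`[E[ν_λ⁺] + Ṽ₀λ(P_σ)] − E[φHZ_Q]
  = E[(1−φ)ν_λ⁺] + E[φν_λ⁻] + ∫ (Ṽ₀ − E^{P*}[φH]) dλ`. -/
theorem dual_primal_gap_decomposition
    {Ω : Type*} [MeasurableSpace Ω] (P : Measure Ω) [IsProbabilityMeasure P]
    {ι : Type*} [Nonempty ι] [MeasurableSpace ι]
    (H : Ω → ℝ) (hHmeas : Measurable H) (hHint : Integrable H P)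
    (hHpos : ∀ ω, 0 ≤ H ω)
    (Z : ι → Ω → ℝ) (hZmeas : ∀ i, Measurable (Z i)) (hZpos : ∀ i ω, 0 ≤ Z i ω)
    (hZprob : ∀ i, ∫ ω, Z i ω ∂P = 1)
    (hjoint : Measurable fun p : ι × Ω => Z p.1 p.2)
    (hsup : ∃ C, ∀ i, ∫ ω, H ω * Z i ω ∂P ≤ C)
    (V₀ : ℝ) (hV₀ : 0 < V₀)
    (ZQ : Ω → ℝ) (hZQmeas : Measurable ZQ) (hZQpos : ∀ ω, 0 ≤ ZQ ω)
    (hZQbdd : ∃ C, ∀ ω, ZQ ω ≤ C) (hZQprob : ∫ ω, ZQ ω ∂P = 1)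
    (μ : Measure ι) [IsFiniteMeasure μ]
    (hmix : Integrable (fun ω => H ω * ∫ i, Z i ω ∂μ) P)
    (φ : Ω → ℝ) (hφ : φ ∈ R0 P H Z V₀) :
    ((∫ ω, max (H ω * ZQ ω - H ω * ∫ i, Z i ω ∂μ) 0 ∂P)
        + V₀ * (μ Set.univ).toReal) - ∫ ω, φ ω * H ω * ZQ ω ∂P
      = (∫ ω, (1 - φ ω) * max (H ω * ZQ ω - H ω * ∫ i, Z i ω ∂μ) 0 ∂P)
        + (∫ ω, φ ω * max (-(H ω * ZQ ω - H ω * ∫ i, Z i ω ∂μ)) 0 ∂P)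
        + ∫ i, (V₀ - ∫ ω, φ ω * H ω * Z i ω ∂P) ∂μ ∧
    0 ≤ ∫ ω, (1 - φ ω) * max (H ω * ZQ ω - H ω * ∫ i, Z i ω ∂μ) 0 ∂P ∧
    0 ≤ ∫ ω, φ ω * max (-(H ω * ZQ ω - H ω * ∫ i, Z i ω ∂μ)) 0 ∂P ∧
    0 ≤ ∫ i, (V₀ - ∫ ω, φ ω * H ω * Z i ω ∂P) ∂μ := by
  obtain ⟨hφm, hφ01, hφV⟩ := hφ
  have hφ0 : ∀ ω, 0 ≤ φ ω := fun ω => (hφ01 ω).1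
  have hφ1 : ∀ ω, φ ω ≤ 1 := fun ω => (hφ01 ω).2
  have hφn : ∀ ω, ‖φ ω‖ ≤ 1 := fun ω => abs_le.mpr ⟨by linarith [hφ0 ω], hφ1 ω⟩
  have hInn : ∀ ω, 0 ≤ ∫ i, Z i ω ∂μ := fun ω => integral_nonneg fun i => hZpos i ω
  have hK : Measurable fun p : Ω × ι => Z p.2 p.1 := hjoint.comp measurable_swap
  -- each Z i is integrable w.r.t. P
  have hZint : ∀ i, Integrable (Z i) P := by
    intro i
    by_contra h
    have := hZprob i
    rw [integral_undef h] at this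
    norm_num at this
  have hZlint : ∀ i, ∫⁻ ω, ENNReal.ofReal (Z i ω) ∂P = 1 := by
    intro i
    rw [← ofReal_integral_eq_lintegral_ofReal (hZint i)
      (Filter.Eventually.of_forall (hZpos i)), hZprob i, ENNReal.ofReal_one]
  -- Tonelli for Z : the double lintegral is finite
  have hKae : AEMeasurable (Function.uncurry fun (ω : Ω) (i : ι) =>
      ENNReal.ofReal (Z i ω)) (P.prod μ) :=
    (ENNReal.measurable_ofReal.comp hK).aemeasurable
  have hfin : ∫⁻ ω, ∫⁻ i, ENNReal.ofReal (Z i ω) ∂μ ∂P < ⊤ := by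
    rw [lintegral_lintegral_swap hKae]
    simp only [hZlint, lintegral_one]
    exact measure_lt_top μ univ
  have hKωmeas : ∀ ω, Measurable fun i => Z i ω := fun ω =>
    hjoint.comp (measurable_id.prodMk measurable_const)
  have haefin : ∀ᵐ ω ∂P, ∫⁻ i, ENNReal.ofReal (Z i ω) ∂μ < ⊤ :=
    ae_lt_top (Measurable.lintegral_prod_right (ENNReal.measurable_ofReal.comp hK)) hfin.ne
  have haeint : ∀ᵐ ω ∂P, Integrable (fun i => Z i ω) μ := by
    filter_upwards [haefin] with ω hω
    refine ⟨(hKωmeas ω).aestronglyMeasurable, ?_⟩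
    rw [hasFiniteIntegral_iff_ofReal (Filter.Eventually.of_forall fun i => hZpos i ω)]
    exact hω
  -- the product-integrand
  have hFmeas : Measurable fun p : Ω × ι => φ p.1 * H p.1 * Z p.2 p.1 :=
    ((hφm.comp measurable_fst).mul (hHmeas.comp measurable_fst)).mul hK
  have hFprod : Integrable (fun p : Ω × ι => φ p.1 * H p.1 * Z p.2 p.1) (P.prod μ) := by
    rw [integrable_prod_iff hFmeas.aestronglyMeasurable]
    constructor
    · filter_upwards [haeint] with ω hω
      simpa only [mul_assoc] using hω.const_mul (φ ω * H ω)
    · have heq : ∀ ω, (∫ i, ‖φ ω * H ω * Z i ω‖ ∂μ)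
          = φ ω * H ω * ∫ i, Z i ω ∂μ := by
        intro ω
        rw [← integral_const_mul]
        refine integral_congr_ae (Filter.Eventually.of_forall fun i => ?_)
        dsimp only
        rw [Real.norm_eq_abs, abs_of_nonneg
          (mul_nonneg (mul_nonneg (hφ0 ω) (hHpos ω)) (hZpos i ω))]
      refine hmix.mono' ?_ (Filter.Eventually.of_forall fun ω => ?_)
      · exact (hFmeas.norm.stronglyMeasurable.integral_prod_right').aestronglyMeasurable
      · rw [heq ω, Real.norm_eq_abs, abs_of_nonneg
          (mul_nonneg (mul_nonneg (hφ0 ω) (hHpos ω)) (hInn ω))]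
        have h1 : φ ω * (H ω * ∫ i, Z i ω ∂μ) ≤ 1 * (H ω * ∫ i, Z i ω ∂μ) :=
          mul_le_mul_of_nonneg_right (hφ1 ω) (mul_nonneg (hHpos ω) (hInn ω))
        nlinarith [mul_nonneg (hHpos ω) (hInn ω)]
  -- Fubini
  have hFubini : ∫ ω, φ ω * (H ω * ∫ i, Z i ω ∂μ) ∂P
      = ∫ i, ∫ ω, φ ω * H ω * Z i ω ∂P ∂μ := by
    have hswapF : ∫ ω, ∫ i, φ ω * H ω * Z i ω ∂μ ∂P
        = ∫ i, ∫ ω, φ ω * H ω * Z i ω ∂P ∂μ :=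
      integral_integral_swap (f := fun ω i => φ ω * H ω * Z i ω) hFprod
    rw [← hswapF]
    refine integral_congr_ae (Filter.Eventually.of_forall fun ω => ?_)
    dsimp only
    rw [integral_const_mul]
    ring
  -- integrabilities over P
  have hHZQ : Integrable (fun ω => H ω * ZQ ω) P := by
    obtain ⟨C, hC⟩ := hZQbdd
    have := hHint.bdd_mul hZQmeas.aestronglyMeasurable
      (Filter.Eventually.of_forall (p := fun ω => ‖ZQ ω‖ ≤ C) fun ω => by rw [Real.norm_eq_abs, abs_of_nonneg (hZQpos ω)]; exact hC ω)
    simpa [mul_comm] using this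
  have hν : Integrable (fun ω => H ω * ZQ ω - H ω * ∫ i, Z i ω ∂μ) P := hHZQ.sub hmix
  have hνp : Integrable (fun ω => max (H ω * ZQ ω - H ω * ∫ i, Z i ω ∂μ) 0) P := hν.pos_part
  have hνm : Integrable (fun ω => max (-(H ω * ZQ ω - H ω * ∫ i, Z i ω ∂μ)) 0) P := hν.neg_part
  have hφνp : Integrable (fun ω => φ ω * max (H ω * ZQ ω - H ω * ∫ i, Z i ω ∂μ) 0) P :=
    hνp.bdd_mul hφm.aestronglyMeasurable (Filter.Eventually.of_forall hφn)
  have hφνm : Integrable (fun ω => φ ω * max (-(H ω * ZQ ω - H ω * ∫ i, Z i ω ∂μ)) 0) P :=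
    hνm.bdd_mul hφm.aestronglyMeasurable (Filter.Eventually.of_forall hφn)
  have hφHZQ : Integrable (fun ω => φ ω * H ω * ZQ ω) P := by
    simpa only [mul_assoc] using hHZQ.bdd_mul hφm.aestronglyMeasurable (Filter.Eventually.of_forall hφn)
  have hφHI : Integrable (fun ω => φ ω * (H ω * ∫ i, Z i ω ∂μ)) P :=
    hmix.bdd_mul hφm.aestronglyMeasurable (Filter.Eventually.of_forall hφn)
  -- key algebraic identities
  have E1 : ∫ ω, (1 - φ ω) * max (H ω * ZQ ω - H ω * ∫ i, Z i ω ∂μ) 0 ∂P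
      = (∫ ω, max (H ω * ZQ ω - H ω * ∫ i, Z i ω ∂μ) 0 ∂P)
        - ∫ ω, φ ω * max (H ω * ZQ ω - H ω * ∫ i, Z i ω ∂μ) 0 ∂P := by
    rw [← integral_sub hνp hφνp]
    exact integral_congr_ae (Filter.Eventually.of_forall fun ω => by ring)
  have E2 : (∫ ω, φ ω * max (H ω * ZQ ω - H ω * ∫ i, Z i ω ∂μ) 0 ∂P)
        - ∫ ω, φ ω * max (-(H ω * ZQ ω - H ω * ∫ i, Z i ω ∂μ)) 0 ∂P
      = (∫ ω, φ ω * H ω * ZQ ω ∂P) - ∫ i, ∫ ω, φ ω * H ω * Z i ω ∂P ∂μ := by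
    rw [← hFubini, ← integral_sub hφνp hφνm, ← integral_sub hφHZQ hφHI]
    refine integral_congr_ae (Filter.Eventually.of_forall fun ω => ?_)
    dsimp only
    rw [← mul_sub, max_zero_sub_max_neg_zero_eq_self]
    ring
  have hg : Integrable (fun i => ∫ ω, φ ω * H ω * Z i ω ∂P) μ :=
    hFprod.integral_prod_right
  have E4 : ∫ i, (V₀ - ∫ ω, φ ω * H ω * Z i ω ∂P) ∂μ
      = V₀ * (μ univ).toReal - ∫ i, ∫ ω, φ ω * H ω * Z i ω ∂P ∂μ := by
    rw [integral_sub (integrable_const V₀) hg, integral_const, smul_eq_mul, mul_comm, measureReal_def]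
  refine ⟨?_, ?_, ?_, ?_⟩
  · rw [E1, E4]
    linarith [E2]
  · exact integral_nonneg fun ω =>
      mul_nonneg (by linarith [hφ1 ω]) (le_max_right _ 0)
  · exact integral_nonneg fun ω => mul_nonneg (hφ0 ω) (le_max_right _ 0)
  · exact integral_nonneg fun i => sub_nonneg.mpr (hφV i)
end

section
/- The success ratio of an admissible strategy is a feasible randomized test: let (V₀,ξ) be an admissible strategy with V₀ ≤ Ṽ₀ whose value process V_t is a supermartingale under every P* ∈ P_σ with V_T ≥ 0. Define φ = 1_{V_T ≥ H} + (V_T/H)·1_{V_T < H}. Then φ is a randomized test (0 ≤ φ ≤ 1), φH ≤ V_T, −(H−V_T)⁺ = (φ−1)H, and sup_{P*∈P_σ} E^{P*}[φH] ≤ V₀ ≤ Ṽ₀, i.e., φ ∈ R₀. -/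
open MeasureTheory Set

/-- The success ratio `φ = 1_{V_T ≥ H} + (V_T/H)1_{V_T < H}` of an admissible
strategy with initial capital `V₀ ≤ Ṽ₀`, whose terminal value `V_T ≥ 0`
satisfies the supermartingale bounds `E^{P*}[V_T] ≤ V₀`, is a feasible
randomized test: `0 ≤ φ ≤ 1`, `φH ≤ V_T`, `−(H−V_T)⁺ = (φ−1)H`, and
`sup_{P*} E^{P*}[φH] ≤ V₀ ≤ Ṽ₀`, i.e. `φ ∈ R₀`. -/
theorem success_ratio_mem_R0
    {Ω : Type*} [MeasurableSpace Ω] (P : Measure Ω) [IsProbabilityMeasure P]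
    {ι : Type*} [Nonempty ι]
    (H : Ω → ℝ) (hHmeas : Measurable H) (hHint : Integrable H P)
    (hHpos : ∀ ω, 0 ≤ H ω)
    (Z : ι → Ω → ℝ) (hZmeas : ∀ i, Measurable (Z i)) (hZpos : ∀ i ω, 0 ≤ Z i ω)
    (hZprob : ∀ i, ∫ ω, Z i ω ∂P = 1)
    (V₀ Vt₀ : ℝ) (hV₀ : 0 < V₀) (hVle : V₀ ≤ Vt₀)
    (VT : Ω → ℝ) (hVTmeas : Measurable VT) (hVTpos : ∀ ω, 0 ≤ VT ω)
    (hVTint : ∀ i, Integrable (fun ω => VT ω * Z i ω) P)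
    (hsupermart : ∀ i, ∫ ω, VT ω * Z i ω ∂P ≤ V₀) :
    let φ : Ω → ℝ := fun ω => if H ω ≤ VT ω then 1 else VT ω / H ω
    Measurable φ ∧ (∀ ω, φ ω ∈ Set.Icc (0 : ℝ) 1) ∧
    (∀ ω, φ ω * H ω ≤ VT ω) ∧
    (∀ ω, -(max (H ω - VT ω) 0) = (φ ω - 1) * H ω) ∧
    (∀ i, ∫ ω, φ ω * H ω * Z i ω ∂P ≤ V₀) ∧
    φ ∈ R0 P H Z Vt₀ := by
  intro φ
  have hφmeas : Measurable φ := by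
    apply Measurable.ite (measurableSet_le hHmeas hVTmeas) measurable_const
    exact hVTmeas.div hHmeas
  have hφmem : ∀ ω, φ ω ∈ Set.Icc (0 : ℝ) 1 := by
    intro ω
    by_cases h : H ω ≤ VT ω
    · simp [φ, h]
    · have hH0 : 0 < H ω := lt_of_le_of_lt (hVTpos ω) (not_le.mp h)
      constructor
      · simp only [φ, if_neg h]
        exact div_nonneg (hVTpos ω) hH0.le
      · simp only [φ, if_neg h]
        exact div_le_one_of_le₀ (not_le.mp h).le hH0.le
  have hφH : ∀ ω, φ ω * H ω ≤ VT ω := by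
    intro ω
    by_cases h : H ω ≤ VT ω
    · simp [φ, h]
    · have hH0 : 0 < H ω := lt_of_le_of_lt (hVTpos ω) (not_le.mp h)
      simp only [φ, if_neg h]
      rw [div_mul_cancel₀ _ hH0.ne']
  have hid : ∀ ω, -(max (H ω - VT ω) 0) = (φ ω - 1) * H ω := by
    intro ω
    by_cases h : H ω ≤ VT ω
    · simp [φ, h, max_eq_right (sub_nonpos.mpr h)]
    · have hH0 : 0 < H ω := lt_of_le_of_lt (hVTpos ω) (not_le.mp h)
      simp only [φ, if_neg h]
      rw [max_eq_left (sub_nonneg.mpr (not_le.mp h).le), sub_mul,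
        div_mul_cancel₀ _ hH0.ne', one_mul]
      ring
  have hint : ∀ i, ∫ ω, φ ω * H ω * Z i ω ∂P ≤ V₀ := by
    intro i
    have hle : ∀ ω, φ ω * H ω * Z i ω ≤ VT ω * Z i ω := fun ω =>
      mul_le_mul_of_nonneg_right (hφH ω) (hZpos i ω)
    have hnn : ∀ ω, 0 ≤ φ ω * H ω * Z i ω := fun ω =>
      mul_nonneg (mul_nonneg (hφmem ω).1 (hHpos ω)) (hZpos i ω)
    have hintg : Integrable (fun ω => φ ω * H ω * Z i ω) P := by
      refine (hVTint i).mono ((hφmeas.mul hHmeas).mul (hZmeas i)).aestronglyMeasurable ?_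
      filter_upwards with ω
      rw [Real.norm_eq_abs, Real.norm_eq_abs, abs_of_nonneg (hnn ω),
        abs_of_nonneg (mul_nonneg (hVTpos ω) (hZpos i ω))]
      exact hle ω
    exact le_trans (integral_mono hintg (hVTint i) hle) (hsupermart i)
  refine ⟨hφmeas, hφmem, hφH, hid, hint, hφmeas, hφmem, fun i => le_trans (hint i) hVle⟩
end

section
/- Decomposition of the dynamic problem: if φ̃ solves min_{φ∈R₀} ρ((φ−1)H) and ξ̃ is a superhedging strategy for the modified claim φ̃H (i.e., Ũ₀ + ∫₀ᵀ ξ̃ dS ≥ φ̃H where Ũ₀ = sup_{P*∈P_σ}E^{P*}[φ̃H] ≤ Ṽ₀), then the strategy (Ṽ₀, ξ̃) minimizes ρ(−(H−V_T)⁺) over all admissible strategies (V₀,ξ) with 0 < V₀ ≤ Ṽ₀, and min_{(V₀,ξ)} ρ(−(H−V_T)⁺) = min_{φ∈R₀} ρ((φ−1)H). -/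
open MeasureTheory Set

/-- Decomposition of the dynamic problem: if `φ̃` solves the static problem
`min_{φ∈R₀} ρ((φ−1)H)` and `Ṽ_T` is the terminal value of a superhedging
strategy for the modified claim `φ̃H` with initial capital `Ṽ₀`, then this
strategy minimizes the shortfall risk `ρ(−(H−V_T)⁺)` over all admissible
strategies with initial capital `0 < V₀ ≤ Ṽ₀`, and the dynamic and static
minimal values coincide. Here `𝒱 c` denotes the set of terminal values of
admissible strategies with initial capital `c`; by the supermartingale property
each `X ∈ 𝒱 c` is nonnegative, measurable and satisfies `E^{P*}[X] ≤ c`. -/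
theorem decomposition_of_dynamic_problem
    {Ω : Type*} [MeasurableSpace Ω] (P : Measure Ω) [IsProbabilityMeasure P]
    {ι : Type*} [Nonempty ι]
    (H : Ω → ℝ) (hHmeas : Measurable H) (hHint : Integrable H P)
    (hHpos : ∀ ω, 0 ≤ H ω)
    (Z : ι → Ω → ℝ) (hZmeas : ∀ i, Measurable (Z i)) (hZpos : ∀ i ω, 0 ≤ Z i ω)
    (hZprob : ∀ i, ∫ ω, Z i ω ∂P = 1)
    (ρ : (Ω → ℝ) → EReal)
    (hρ0 : ρ 0 = 0)
    (hmono : ∀ X Y : Ω → ℝ, (∀ ω, X ω ≤ Y ω) → ρ Y ≤ ρ X)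
    (htrans : ∀ (X : Ω → ℝ) (c : ℝ), ρ (fun ω => X ω + c) = ρ X - (c : EReal))
    (hconv : ∀ (X Y : Ω → ℝ) (t : ℝ), t ∈ Set.Icc (0 : ℝ) 1 →
      ρ (fun ω => t * X ω + (1 - t) * Y ω)
        ≤ (t : EReal) * ρ X + ((1 - t : ℝ) : EReal) * ρ Y)
    (𝒱 : ℝ → Set (Ω → ℝ))
    (h𝒱 : ∀ c, ∀ X ∈ 𝒱 c, Measurable X ∧ (∀ ω, 0 ≤ X ω) ∧
      ∀ i, Integrable (fun ω => X ω * Z i ω) P ∧ ∫ ω, X ω * Z i ω ∂P ≤ c)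
    (Vt₀ : ℝ) (hVt₀ : 0 < Vt₀)
    (φt : Ω → ℝ) (hφt : φt ∈ R0 P H Z Vt₀)
    (hφtmin : ∀ φ ∈ R0 P H Z Vt₀,
      ρ (fun ω => (φt ω - 1) * H ω) ≤ ρ (fun ω => (φ ω - 1) * H ω))
    (VTt : Ω → ℝ) (hVTt : VTt ∈ 𝒱 Vt₀)
    (hhedge : ∀ ω, φt ω * H ω ≤ VTt ω) :
    (∀ V₀ ∈ Set.Ioc (0 : ℝ) Vt₀, ∀ VT ∈ 𝒱 V₀,
      ρ (fun ω => -(max (H ω - VTt ω) 0)) ≤ ρ (fun ω => -(max (H ω - VT ω) 0))) ∧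
    ρ (fun ω => -(max (H ω - VTt ω) 0)) = ρ (fun ω => (φt ω - 1) * H ω) := by
  -- Key lemma: for any admissible terminal value the static minimum is a lower bound.
  have key : ∀ V₀ ∈ Set.Ioc (0 : ℝ) Vt₀, ∀ VT ∈ 𝒱 V₀,
      ρ (fun ω => (φt ω - 1) * H ω) ≤ ρ (fun ω => -(max (H ω - VT ω) 0)) := by
    intro V₀ hV₀ VT hVT
    obtain ⟨hVTmeas, hVTpos, hVTint⟩ := h𝒱 V₀ VT hVT
    set φ : Ω → ℝ := fun ω => min 1 (if H ω = 0 then 1 else VT ω / H ω) with hφdef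
    have hφmeas : Measurable φ :=
      measurable_const.min (Measurable.ite (hHmeas (measurableSet_singleton 0))
        measurable_const (hVTmeas.div hHmeas))
    have hφH : ∀ ω, φ ω * H ω = min (H ω) (VT ω) := by
      intro ω
      by_cases h0 : H ω = 0
      · simp [hφdef, h0, min_eq_left (hVTpos ω)]
      · simp only [hφdef, h0, if_false]
        rw [min_mul_of_nonneg _ _ (hHpos ω), one_mul, div_mul_cancel₀ _ h0]
    have hφR : φ ∈ R0 P H Z Vt₀ := by
      refine ⟨hφmeas, ?_, ?_⟩
      · intro ω
        constructor
        · by_cases h0 : H ω = 0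
          · simp [hφdef, h0]
          · simp only [hφdef, h0, if_false]
            exact le_min zero_le_one (div_nonneg (hVTpos ω) (hHpos ω))
        · exact min_le_left _ _
      · intro i
        have hle : ∀ ω, φ ω * H ω * Z i ω ≤ VT ω * Z i ω := by
          intro ω
          rw [hφH ω]
          exact mul_le_mul_of_nonneg_right (min_le_right _ _) (hZpos i ω)
        have hnn : ∀ ω, 0 ≤ φ ω * H ω * Z i ω := by
          intro ω
          rw [hφH ω]
          exact mul_nonneg (le_min (hHpos ω) (hVTpos ω)) (hZpos i ω)
        have hint : Integrable (fun ω => φ ω * H ω * Z i ω) P := by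
          refine (hVTint i).1.mono' ((hφmeas.mul hHmeas).mul (hZmeas i)).aestronglyMeasurable ?_
          refine Filter.Eventually.of_forall fun ω => ?_
          rw [Real.norm_eq_abs, abs_of_nonneg (hnn ω)]
          exact hle ω
        calc ∫ ω, φ ω * H ω * Z i ω ∂P ≤ ∫ ω, VT ω * Z i ω ∂P :=
                integral_mono hint (hVTint i).1 hle
          _ ≤ V₀ := (hVTint i).2
          _ ≤ Vt₀ := hV₀.2
    have heq : (fun ω => (φ ω - 1) * H ω) = (fun ω => -(max (H ω - VT ω) 0)) := by
      funext ω
      have := hφH ω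
      rcases le_total (H ω) (VT ω) with h | h
      · rw [min_eq_left h] at this
        have : φ ω * H ω = H ω := this
        rw [max_eq_right (by linarith)]
        nlinarith
      · rw [min_eq_right h] at this
        rw [max_eq_left (by linarith)]
        nlinarith
    calc ρ (fun ω => (φt ω - 1) * H ω) ≤ ρ (fun ω => (φ ω - 1) * H ω) := hφtmin φ hφR
      _ = _ := by rw [heq]
  -- Monotonicity step: ρ(−(H−VTt)⁺) ≤ ρ((φt−1)H)
  have hmle : ρ (fun ω => -(max (H ω - VTt ω) 0)) ≤ ρ (fun ω => (φt ω - 1) * H ω) := by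
    refine hmono _ _ fun ω => ?_
    obtain ⟨_, hφbox, _⟩ := hφt
    have h1 : φt ω ≤ 1 := (hφbox ω).2
    have h0 : 0 ≤ φt ω := (hφbox ω).1
    have hh := hhedge ω
    rcases le_total (H ω) (VTt ω) with h | h
    · rw [max_eq_right (by linarith)]
      nlinarith [hHpos ω]
    · rw [max_eq_left (by linarith)]
      nlinarith
  have hge : ρ (fun ω => (φt ω - 1) * H ω) ≤ ρ (fun ω => -(max (H ω - VTt ω) 0)) :=
    key Vt₀ ⟨hVt₀, le_refl _⟩ VTt hVTt
  refine ⟨fun V₀ hV₀ VT hVT => le_trans hmle (key V₀ hV₀ VT hVT), le_antisymm hmle hge⟩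
end

section
/- If the value processes of admissible strategies are supermartingales under each P* ∈ P_σ, then for any admissible strategy (V₀, ξ) with terminal value V_T, the shortfall risk satisfies ρ(−(H−V_T)⁺) = ρ((φ−1)H) ≥ min_{φ'∈R₀} ρ((φ'−1)H), where φ is the success ratio of (V₀,ξ); i.e., the static problem value is a lower bound for the dynamic problem value. -/
open MeasureTheory Set

/-- The static value is a lower bound for the dynamic value: for any admissible
strategy with terminal value `V_T` (nonnegative, `E^{P*}[V_T] ≤ V₀ ≤ Ṽ₀` by the
supermartingale property), the shortfall risk satisfies
`ρ(−(H−V_T)⁺) = ρ((φ−1)H) ≥ min_{φ'∈R₀} ρ((φ'−1)H)`, where `φ` is the success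
ratio `φ = 1_{V_T≥H} + (V_T/H)1_{V_T<H}`. -/
theorem static_value_lower_bound_for_dynamic
    {Ω : Type*} [MeasurableSpace Ω] (P : Measure Ω) [IsProbabilityMeasure P]
    {ι : Type*} [Nonempty ι]
    (H : Ω → ℝ) (hHmeas : Measurable H) (hHint : Integrable H P)
    (hHpos : ∀ ω, 0 ≤ H ω)
    (Z : ι → Ω → ℝ) (hZmeas : ∀ i, Measurable (Z i)) (hZpos : ∀ i ω, 0 ≤ Z i ω)
    (hZprob : ∀ i, ∫ ω, Z i ω ∂P = 1)
    (ρ : (Ω → ℝ) → EReal)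
    (hρ0 : ρ 0 = 0)
    (hmono : ∀ X Y : Ω → ℝ, (∀ ω, X ω ≤ Y ω) → ρ Y ≤ ρ X)
    (htrans : ∀ (X : Ω → ℝ) (c : ℝ), ρ (fun ω => X ω + c) = ρ X - (c : EReal))
    (hconv : ∀ (X Y : Ω → ℝ) (t : ℝ), t ∈ Set.Icc (0 : ℝ) 1 →
      ρ (fun ω => t * X ω + (1 - t) * Y ω)
        ≤ (t : EReal) * ρ X + ((1 - t : ℝ) : EReal) * ρ Y)
    (V₀ Vt₀ : ℝ) (hV₀ : 0 < V₀) (hVle : V₀ ≤ Vt₀)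
    (VT : Ω → ℝ) (hVTmeas : Measurable VT) (hVTpos : ∀ ω, 0 ≤ VT ω)
    (hVTint : ∀ i, Integrable (fun ω => VT ω * Z i ω) P)
    (hsupermart : ∀ i, ∫ ω, VT ω * Z i ω ∂P ≤ V₀)
    (φt : Ω → ℝ) (hφt : φt ∈ R0 P H Z Vt₀)
    (hφtmin : ∀ φ ∈ R0 P H Z Vt₀,
      ρ (fun ω => (φt ω - 1) * H ω) ≤ ρ (fun ω => (φ ω - 1) * H ω)) :
    ρ (fun ω => -(max (H ω - VT ω) 0))
        = ρ (fun ω => ((if H ω ≤ VT ω then (1 : ℝ) else VT ω / H ω) - 1) * H ω) ∧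
    ρ (fun ω => (φt ω - 1) * H ω) ≤ ρ (fun ω => -(max (H ω - VT ω) 0)) := by
  set φ : Ω → ℝ := fun ω => if H ω ≤ VT ω then (1 : ℝ) else VT ω / H ω with hφdef
  have hkey : ∀ ω, -(max (H ω - VT ω) 0) = (φ ω - 1) * H ω := by
    intro ω
    by_cases h : H ω ≤ VT ω
    · simp [hφdef, h, max_eq_right (sub_nonpos.mpr h)]
    · push_neg at h
      have hH0 : 0 < H ω := lt_of_le_of_lt (hVTpos ω) h
      have : max (H ω - VT ω) 0 = H ω - VT ω :=
        max_eq_left (sub_nonneg.mpr h.le)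
      rw [this]
      simp only [hφdef, if_neg (not_le.mpr h)]
      field_simp
      ring
  have heq : (fun ω => -(max (H ω - VT ω) 0)) = fun ω => (φ ω - 1) * H ω :=
    funext hkey
  have hφmem : φ ∈ R0 P H Z Vt₀ := by
    refine ⟨?_, ?_, ?_⟩
    · exact Measurable.ite (measurableSet_le hHmeas hVTmeas) measurable_const
        (hVTmeas.div hHmeas)
    · intro ω
      by_cases h : H ω ≤ VT ω
      · simp [hφdef, h]
      · push_neg at h
        have hH0 : 0 < H ω := lt_of_le_of_lt (hVTpos ω) h
        simp only [hφdef, if_neg (not_le.mpr h), Set.mem_Icc]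
        constructor
        · exact div_nonneg (hVTpos ω) hH0.le
        · exact (div_le_one hH0).mpr h.le
    · intro i
      have hle : ∀ ω, φ ω * H ω * Z i ω ≤ VT ω * Z i ω := by
        intro ω
        refine mul_le_mul_of_nonneg_right ?_ (hZpos i ω)
        by_cases h : H ω ≤ VT ω
        · simp only [hφdef, if_pos h, one_mul]; exact h
        · push_neg at h
          have hH0 : 0 < H ω := lt_of_le_of_lt (hVTpos ω) h
          simp only [hφdef, if_neg (not_le.mpr h)]
          rw [div_mul_cancel₀ _ hH0.ne']
      have hnn : ∀ ω, 0 ≤ φ ω * H ω * Z i ω := by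
        intro ω
        by_cases h : H ω ≤ VT ω
        · simp only [hφdef, if_pos h, one_mul]
          exact mul_nonneg (hHpos ω) (hZpos i ω)
        · simp only [hφdef, if_neg h]
          exact mul_nonneg (mul_nonneg (div_nonneg (hVTpos ω) (hHpos ω)) (hHpos ω))
            (hZpos i ω)
      calc ∫ ω, φ ω * H ω * Z i ω ∂P ≤ ∫ ω, VT ω * Z i ω ∂P :=
            integral_mono_of_nonneg (Filter.Eventually.of_forall hnn) (hVTint i)
              (Filter.Eventually.of_forall hle)
        _ ≤ V₀ := hsupermart i
        _ ≤ Vt₀ := hVle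
  refine ⟨by rw [heq], ?_⟩
  rw [heq]
  exact hφtmin φ hφmem
end
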